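/- For any CRT excursion g and sign sequence s, the shuffled points b'_i, i ∈ ℕ, are dense in [0,1]. -/

import Mathlib

open MeasureTheory Set

noncomputable section

/-- `x` is not a one-sided minimum of `g`. -/
def NotOneSidedMin (g : ℝ → ℝ) (x : ℝ) : Prop :=
  x ∈ Set.Ioo (0:ℝ) 1 ∧ ∀ ε > 0, (∃ x₁ ∈ Set.Ioo (x-ε) x, g x₁ < g x) ∧
    (∃ x₂ ∈ Set.Ioo x (x+ε), g x₂ < g x)

/-- `b` is an inner local minimum of `g`. -/
def IsInnerLocalMin (g : ℝ → ℝ) (b : ℝ) : Prop :=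
  b ∈ Set.Ioo (0:ℝ) 1 ∧ ∃ ε > 0, ∀ x ∈ Set.Ioo (b-ε) (b+ε), g b ≤ g x

/-- `b` is a strict (inner) local minimum of `g`. -/
def IsStrictLocalMin (g : ℝ → ℝ) (b : ℝ) : Prop :=
  b ∈ Set.Ioo (0:ℝ) 1 ∧ ∃ ε > 0, ∀ x ∈ Set.Ioo (b-ε) (b+ε), x ≠ b → g b < g x

/-- A CRT excursion. -/
structure IsCRT (g : ℝ → ℝ) : Prop where
  cont : ContinuousOn g (Set.Icc 0 1)
  nonneg : ∀ t ∈ Set.Icc (0:ℝ) 1, 0 ≤ g t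
  pos : ∀ t ∈ Set.Ioo (0:ℝ) 1, 0 < g t
  zero0 : g 0 = 0
  zero1 : g 1 = 0
  dense_min : ∀ x ∈ Set.Icc (0:ℝ) 1, x ∈ closure {b | IsInnerLocalMin g b}
  distinct : ∀ b b', IsInnerLocalMin g b → IsInnerLocalMin g b' → g b = g b' → b = b'
  leaves_full : volume {x | NotOneSidedMin g x} = 1

/-- `β` is the unique minimum point of `g` on `[x,y]`, lies in `(x,y)`,
and is a strict local minimum: the most recent common ancestor of `x < y`. -/
def IsMrca (g : ℝ → ℝ) (β x y : ℝ) : Prop :=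
  x < y ∧ β ∈ Set.Ioo x y ∧ IsStrictLocalMin g β ∧
    (∀ t ∈ Set.Icc x y, g β ≤ g t) ∧ (∀ t ∈ Set.Icc x y, g t = g β → t = β)

/-- `x` and `y` are `g`-comparable. -/
def GComparable (g : ℝ → ℝ) (x y : ℝ) : Prop :=
  ∃ β, IsMrca g β (min x y) (max x y)

/-- `b` enumerates (injectively) the strict local minima of `g`. -/
def IsEnum (g : ℝ → ℝ) (b : ℕ → ℝ) : Prop :=
  Function.Injective b ∧ ∀ β, IsStrictLocalMin g β ↔ ∃ i, b i = β

/-- The sign-shuffled comparison relation `u ⊲ v` : if the mrca of `u,v` carries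
sign `⊕` (`true`) then the smaller goes first, otherwise the bigger goes first. -/
def Tri (g : ℝ → ℝ) (b : ℕ → ℝ) (s : ℕ → Bool) (u v : ℝ) : Prop :=
  ∃ i, (IsMrca g (b i) u v ∧ s i = true) ∨ (IsMrca g (b i) v u ∧ s i = false)

/-- The measure-preserving function `φ_{g,s}`. -/
def phi (g : ℝ → ℝ) (b : ℕ → ℝ) (s : ℕ → Bool) (t : ℝ) : ℝ :=
  (volume {u ∈ Set.Icc (0:ℝ) 1 | Tri g b s u t}).toReal

def aPt (g : ℝ → ℝ) (β : ℝ) : ℝ := sSup {t | t < β ∧ g t = g β}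
def cPt (g : ℝ → ℝ) (β : ℝ) : ℝ := sInf {t | β < t ∧ g t = g β}

def aI (g : ℝ → ℝ) (b : ℕ → ℝ) (i : ℕ) : ℝ := aPt g (b i)
def cI (g : ℝ → ℝ) (b : ℕ → ℝ) (i : ℕ) : ℝ := cPt g (b i)
def aI' (g : ℝ → ℝ) (b : ℕ → ℝ) (s : ℕ → Bool) (i : ℕ) : ℝ := phi g b s (aI g b i)
def cI' (g : ℝ → ℝ) (b : ℕ → ℝ) (s : ℕ → Bool) (i : ℕ) : ℝ :=
  aI' g b s i + (cI g b i - aI g b i)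
def bI' (g : ℝ → ℝ) (b : ℕ → ℝ) (s : ℕ → Bool) (i : ℕ) : ℝ :=
  aI' g b s i + (if s i then b i - aI g b i else cI g b i - b i)

/-- The permuton `μ_{g,s} = (Id, φ_{g,s})_* Leb`. -/
def permuton (g : ℝ → ℝ) (b : ℕ → ℝ) (s : ℕ → Bool) : Measure (ℝ × ℝ) :=
  Measure.map (fun t => (t, phi g b s t)) (volume.restrict (Set.Icc 0 1))

/-- Property (A) of a signed excursion. -/
def PropA (g : ℝ → ℝ) (b : ℕ → ℝ) (s : ℕ → Bool) : Prop :=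
  ∀ i j, i ≠ j →
    Set.Icc (aI' g b s j) (cI' g b s j) ⊆ Set.Icc (aI' g b s i) (cI' g b s i) →
    (∀ y ∈ Set.Icc (g (b i)) (g (b j)),
      y ∈ closure {h | ∃ l, h = g (b l) ∧
        Set.Icc (aI' g b s l) (cI' g b s l) ⊆ Set.Icc (aI' g b s i) (cI' g b s i) ∧
        Set.Icc (aI' g b s j) (cI' g b s j) ⊆ Set.Icc (bI' g b s l) (cI' g b s l)}) ∧
    (∀ y ∈ Set.Icc (g (b i)) (g (b j)),
      y ∈ closure {h | ∃ l, h = g (b l) ∧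
        Set.Icc (aI' g b s l) (cI' g b s l) ⊆ Set.Icc (aI' g b s i) (cI' g b s i) ∧
        Set.Icc (aI' g b s j) (cI' g b s j) ⊆ Set.Icc (aI' g b s l) (bI' g b s l)})

/-- The shuffled excursion `f_{g,s}`. -/
def fShuffle (g : ℝ → ℝ) (b : ℕ → ℝ) (s : ℕ → Bool) (t : ℝ) : ℝ :=
  ⨆ i, Set.indicator (Set.Icc (aI' g b s i) (cI' g b s i)) (fun _ => g (b i)) t

/-- Topological support of a measure. -/
def mSupport {α : Type*} [TopologicalSpace α] [MeasurableSpace α] (μ : Measure α) : Set α :=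
  {x | ∀ U : Set α, IsOpen U → x ∈ U → μ U ≠ 0}

namespace CRTAux

variable {g : ℝ → ℝ} {b : ℕ → ℝ} {s : ℕ → Bool}

lemma inner_of_strict {β : ℝ} (h : IsStrictLocalMin g β) : IsInnerLocalMin g β := by
  obtain ⟨hm, ε, hε, h⟩ := h
  refine ⟨hm, ε, hε, fun x hx => ?_⟩
  rcases eq_or_ne x β with rfl | hne
  · exact le_rfl
  · exact (h x hx hne).le

lemma strict_of_inner (hg : IsCRT g) {β : ℝ} (h : IsInnerLocalMin g β) :
    IsStrictLocalMin g β := by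
  obtain ⟨hm, ε, hε, hmin⟩ := h
  obtain ⟨hβ0, hβ1⟩ := hm
  set ε' := min ε (min β (1-β)) with hε'def
  have hε' : 0 < ε' := lt_min hε (lt_min hβ0 (by linarith))
  refine ⟨⟨hβ0, hβ1⟩, ε', hε', fun x hx hne => ?_⟩
  have hxε : x ∈ Ioo (β-ε) (β+ε) := by
    constructor
    · have := hx.1; have : β - ε ≤ β - ε' := by
        have := min_le_left ε (min β (1-β)); linarith
      linarith [hx.1]
    · have := min_le_left ε (min β (1-β)); linarith [hx.2]
  have hle : g β ≤ g x := hmin x hxε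
  rcases lt_or_eq_of_le hle with h' | h'
  · exact h'
  · -- g x = g β, derive contradiction
    exfalso
    have hx01 : x ∈ Ioo (0:ℝ) 1 := by
      have h1 := min_le_right ε (min β (1-β))
      have h2 := min_le_left β (1-β)
      have h3 := min_le_right β (1-β)
      constructor
      · have : β - ε' ≥ 0 := by
          have : ε' ≤ β := le_trans h1 h2
          linarith
        linarith [hx.1]
      · have : β + ε' ≤ 1 := by
          have : ε' ≤ 1 - β := le_trans h1 h3
          linarith
        linarith [hx.2]
    have hxinner : IsInnerLocalMin g x := by
      refine ⟨hx01, ε' - |x - β|, ?_, fun y hy => ?_⟩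
      · have : |x - β| < ε' := abs_sub_lt_iff.2 ⟨by linarith [hx.2], by linarith [hx.1]⟩
        linarith
      · have h1 := min_le_left ε (min β (1-β))
        have habs1 : |y - x| < ε' - |x - β| :=
          abs_sub_lt_iff.2 ⟨by linarith [hy.2], by linarith [hy.1]⟩
        have habs2 : |y - β| < ε' := by
          have := abs_sub_le y x β
          linarith
        have hyε : y ∈ Ioo (β-ε) (β+ε) := by
          rcases abs_sub_lt_iff.1 habs2 with ⟨hb1, hb2⟩
          constructor <;> [linarith; linarith]
        calc g x = g β := h'.symm
        _ ≤ g y := hmin y hyε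
    have := hg.distinct x β hxinner ⟨⟨hβ0, hβ1⟩, ε, hε, hmin⟩ (h' ▸ rfl)
    exact hne this

lemma contAt (hg : IsCRT g) {x : ℝ} (hx : x ∈ Ioo (0:ℝ) 1) : ContinuousAt g x :=
  hg.cont.continuousAt (Icc_mem_nhds hx.1 hx.2)

/-- The defining data of aPt. -/
lemma aPt_spec (hg : IsCRT g) {β : ℝ} (hβ : IsStrictLocalMin g β) :
    aPt g β ∈ Ioo (0:ℝ) β ∧ g (aPt g β) = g β ∧
      ∀ t ∈ Ioo (aPt g β) β, g β < g t := by
  obtain ⟨⟨hβ0, hβ1⟩, ε₀, hε₀, hstrict⟩ := hβ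
  have hgβ : 0 < g β := hg.pos β ⟨hβ0, hβ1⟩
  set T := {t | t < β ∧ g t = g β} with hT
  -- a point t₁ just left of β with g t₁ > g β
  set t₁ := β - min ε₀ β / 2 with ht₁def
  have hmin01 : 0 < min ε₀ β := lt_min hε₀ hβ0
  have ht₁β : t₁ < β := by simp only [ht₁def]; linarith
  have ht₁0 : 0 < t₁ := by
    have : min ε₀ β ≤ β := min_le_right _ _
    simp only [ht₁def]; linarith
  have ht₁ε : β - ε₀ < t₁ := by
    have : min ε₀ β ≤ ε₀ := min_le_left _ _
    simp only [ht₁def]; linarith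
  have hgt₁ : g β < g t₁ :=
    hstrict t₁ ⟨ht₁ε, by linarith⟩ (ne_of_lt ht₁β)
  -- IVT to get an element of T in (0, t₁)
  have hcont01 : ContinuousOn g (Icc 0 t₁) :=
    hg.cont.mono (Icc_subset_Icc le_rfl (by linarith))
  have hIVT := intermediate_value_Icc (le_of_lt ht₁0) hcont01
  have : g β ∈ Icc (g 0) (g t₁) := by
    rw [hg.zero0]; exact ⟨hgβ.le, hgt₁.le⟩
  obtain ⟨t₀, ht₀mem, ht₀⟩ := hIVT this
  have ht₀0 : 0 < t₀ := by
    rcases lt_or_eq_of_le ht₀mem.1 with h | h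
    · exact h
    · exfalso; rw [← h] at ht₀; rw [hg.zero0] at ht₀; linarith
  have ht₀β : t₀ < β := lt_of_le_of_lt ht₀mem.2 ht₁β
  have ht₀T : t₀ ∈ T := ⟨ht₀β, ht₀⟩
  have hTne : T.Nonempty := ⟨t₀, ht₀T⟩
  have hTbdd : BddAbove T := ⟨β, fun t ht => le_of_lt ht.1⟩
  -- all elements of T are ≤ β - ε₀
  have hTle : ∀ t ∈ T, t ≤ β - ε₀ := by
    intro t ht
    by_contra h
    push_neg at h
    have : g β < g t := hstrict t ⟨h, by linarith [ht.1]⟩ (ne_of_lt ht.1)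
    rw [ht.2] at this; exact lt_irrefl _ this
  set a := sSup T with ha
  have haub : a ≤ β - ε₀ := csSup_le hTne hTle
  have halb : t₀ ≤ a := le_csSup hTbdd ht₀T
  have ha0 : 0 < a := lt_of_lt_of_le ht₀0 halb
  have haβ : a < β := by linarith
  -- g a = g β via closure
  have hga : g a = g β := by
    set T' := T ∩ Icc t₀ β with hT'
    have hclos : a ∈ closure T' := by
      rw [Metric.mem_closure_iff]
      intro δ hδ
      obtain ⟨t, htT, htlt⟩ := exists_lt_of_lt_csSup hTne (show a - δ < a by linarith)
      refine ⟨max t t₀, ⟨?_, ?_, ?_⟩, ?_⟩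
      · rcases max_cases t t₀ with ⟨h1, _⟩ | ⟨h1, _⟩
        · rw [h1]; exact htT
        · rw [h1]; exact ht₀T
      · exact le_max_right _ _
      · rcases max_cases t t₀ with ⟨h1, _⟩ | ⟨h1, _⟩ <;> rw [h1]
        · exact htT.1.le
        · exact ht₀β.le
      · have h1 : max t t₀ ≤ a := by
          rcases max_cases t t₀ with ⟨h1, _⟩ | ⟨h1, _⟩ <;> rw [h1]
          · exact le_csSup hTbdd htT
          · exact halb
        have h2 : a - δ < max t t₀ := lt_of_lt_of_le htlt (le_max_left _ _)
        rw [Real.dist_eq, abs_sub_lt_iff]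
        constructor <;> linarith
    have hsub : T' ⊆ Icc (0:ℝ) 1 := by
      intro t ht
      exact ⟨le_trans ht₀0.le ht.2.1, le_trans ht.2.2 hβ1.le⟩
    have hcwa : ContinuousWithinAt g T' a :=
      ((hg.cont a ⟨ha0.le, by linarith⟩).mono hsub)
    have hne' : (nhdsWithin a T').NeBot := mem_closure_iff_nhdsWithin_neBot.mp hclos
    have h1 : Filter.Tendsto g (nhdsWithin a T') (nhds (g a)) := hcwa
    have h2 : Filter.Tendsto g (nhdsWithin a T') (nhds (g β)) := by
      apply Filter.Tendsto.congr' _ tendsto_const_nhds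
      filter_upwards [self_mem_nhdsWithin] with t ht
      exact ht.1.2.symm
    exact tendsto_nhds_unique h1 h2
  refine ⟨⟨ha0, haβ⟩, hga, fun t ht => ?_⟩
  -- strictness on (a, β)
  have htA : a < t := ht.1
  have htB : t < β := ht.2
  by_contra h
  push_neg at h
  rcases lt_or_eq_of_le h with h' | h'
  · -- g t < g β : IVT gives an element of T above a
    obtain ⟨t₂, ht₂⟩ : ∃ t₂, max t (β - ε₀) < t₂ ∧ t₂ < β := by
      have hmax : max t (β - ε₀) < β := max_lt htB (by linarith)
      exact ⟨(max t (β - ε₀) + β)/2, by linarith, by linarith⟩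
    have hgt₂ : g β < g t₂ :=
      hstrict t₂ ⟨by linarith [le_max_right t (β-ε₀), ht₂.1], by linarith [ht₂.2]⟩
        (ne_of_lt ht₂.2)
    have htt₂ : t ≤ t₂ := by linarith [le_max_left t (β-ε₀), ht₂.1]
    have hcont' : ContinuousOn g (Icc t t₂) := by
      apply hg.cont.mono
      apply Icc_subset_Icc
      · linarith
      · linarith
    obtain ⟨w, hwmem, hw⟩ := intermediate_value_Icc htt₂ hcont' ⟨h'.le, hgt₂.le⟩
    have hwT : w ∈ T := ⟨by linarith [hwmem.2, ht₂.2], hw⟩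
    have : w ≤ a := le_csSup hTbdd hwT
    linarith [hwmem.1]
  · -- g t = g β : t ∈ T, contradiction with t > a
    have : t ∈ T := ⟨htB, h'⟩
    have := le_csSup hTbdd this
    linarith

/-- The defining data of cPt. -/
lemma cPt_spec (hg : IsCRT g) {β : ℝ} (hβ : IsStrictLocalMin g β) :
    cPt g β ∈ Ioo β (1:ℝ) ∧ g (cPt g β) = g β ∧
      ∀ t ∈ Ioo β (cPt g β), g β < g t := by
  obtain ⟨⟨hβ0, hβ1⟩, ε₀, hε₀, hstrict⟩ := hβ
  have hgβ : 0 < g β := hg.pos β ⟨hβ0, hβ1⟩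
  set T := {t | β < t ∧ g t = g β} with hT
  set t₁ := β + min ε₀ (1-β) / 2 with ht₁def
  have hmin01 : 0 < min ε₀ (1-β) := lt_min hε₀ (by linarith)
  have ht₁β : β < t₁ := by simp only [ht₁def]; linarith
  have ht₁1 : t₁ < 1 := by
    have : min ε₀ (1-β) ≤ 1-β := min_le_right _ _
    simp only [ht₁def]; linarith
  have ht₁ε : t₁ < β + ε₀ := by
    have : min ε₀ (1-β) ≤ ε₀ := min_le_left _ _
    simp only [ht₁def]; linarith
  have hgt₁ : g β < g t₁ :=
    hstrict t₁ ⟨by linarith, ht₁ε⟩ (ne_of_gt ht₁β)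
  have hcont01 : ContinuousOn g (Icc t₁ 1) :=
    hg.cont.mono (Icc_subset_Icc (by linarith) le_rfl)
  have hIVT := intermediate_value_Icc' (le_of_lt ht₁1) hcont01
  have : g β ∈ Icc (g 1) (g t₁) := by
    rw [hg.zero1]; exact ⟨hgβ.le, hgt₁.le⟩
  obtain ⟨t₀, ht₀mem, ht₀⟩ := hIVT this
  have ht₀1 : t₀ < 1 := by
    rcases lt_or_eq_of_le ht₀mem.2 with h | h
    · exact h
    · exfalso; rw [h] at ht₀; rw [hg.zero1] at ht₀; linarith
  have ht₀β : β < t₀ := lt_of_lt_of_le ht₁β ht₀mem.1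
  have ht₀T : t₀ ∈ T := ⟨ht₀β, ht₀⟩
  have hTne : T.Nonempty := ⟨t₀, ht₀T⟩
  have hTbdd : BddBelow T := ⟨β, fun t ht => le_of_lt ht.1⟩
  have hTle : ∀ t ∈ T, β + ε₀ ≤ t := by
    intro t ht
    by_contra h
    push_neg at h
    have : g β < g t := hstrict t ⟨by linarith [ht.1], h⟩ (ne_of_gt ht.1)
    rw [ht.2] at this; exact lt_irrefl _ this
  set c := sInf T with hc
  have hclb : β + ε₀ ≤ c := le_csInf hTne hTle
  have hcub : c ≤ t₀ := csInf_le hTbdd ht₀T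
  have hc1 : c < 1 := lt_of_le_of_lt hcub ht₀1
  have hcβ : β < c := by linarith
  have hgc : g c = g β := by
    set T' := T ∩ Icc β t₀ with hT'
    have hclos : c ∈ closure T' := by
      rw [Metric.mem_closure_iff]
      intro δ hδ
      obtain ⟨t, htT, htlt⟩ := exists_lt_of_csInf_lt hTne (show c < c + δ by linarith)
      refine ⟨min t t₀, ⟨?_, ?_, ?_⟩, ?_⟩
      · rcases min_cases t t₀ with ⟨h1, _⟩ | ⟨h1, _⟩
        · rw [h1]; exact htT
        · rw [h1]; exact ht₀T
      · rcases min_cases t t₀ with ⟨h1, _⟩ | ⟨h1, _⟩ <;> rw [h1]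
        · exact htT.1.le
        · exact ht₀β.le
      · exact min_le_right _ _
      · have h1 : c ≤ min t t₀ := by
          rcases min_cases t t₀ with ⟨h1, _⟩ | ⟨h1, _⟩ <;> rw [h1]
          · exact csInf_le hTbdd htT
          · exact hcub
        have h2 : min t t₀ < c + δ := lt_of_le_of_lt (min_le_left _ _) htlt
        rw [Real.dist_eq, abs_sub_lt_iff]
        constructor <;> linarith
    have hsub : T' ⊆ Icc (0:ℝ) 1 := by
      intro t ht
      exact ⟨le_trans hβ0.le ht.2.1, le_trans ht.2.2 ht₀1.le⟩
    have hcwa : ContinuousWithinAt g T' c :=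
      ((hg.cont c ⟨by linarith, hc1.le⟩).mono hsub)
    have hne' : (nhdsWithin c T').NeBot := mem_closure_iff_nhdsWithin_neBot.mp hclos
    have h1 : Filter.Tendsto g (nhdsWithin c T') (nhds (g c)) := hcwa
    have h2 : Filter.Tendsto g (nhdsWithin c T') (nhds (g β)) := by
      apply Filter.Tendsto.congr' _ tendsto_const_nhds
      filter_upwards [self_mem_nhdsWithin] with t ht
      exact ht.1.2.symm
    exact tendsto_nhds_unique h1 h2
  refine ⟨⟨hcβ, hc1⟩, hgc, fun t ht => ?_⟩
  have htA : β < t := ht.1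
  have htB : t < c := ht.2
  by_contra h
  push_neg at h
  rcases lt_or_eq_of_le h with h' | h'
  · obtain ⟨t₂, ht₂⟩ : ∃ t₂, β < t₂ ∧ t₂ < min t (β + ε₀) := by
      have hmin : β < min t (β + ε₀) := lt_min htA (by linarith)
      exact ⟨(β + min t (β + ε₀))/2, by linarith, by linarith⟩
    have h2t : t₂ < t := lt_of_lt_of_le ht₂.2 (min_le_left _ _) |>.trans_le le_rfl
    have hgt₂ : g β < g t₂ :=
      hstrict t₂ ⟨by linarith [ht₂.1], lt_of_lt_of_le ht₂.2 (min_le_right _ _)⟩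
        (ne_of_gt ht₂.1)
    have hcont' : ContinuousOn g (Icc t₂ t) := by
      apply hg.cont.mono
      apply Icc_subset_Icc
      · linarith [ht₂.1]
      · linarith
    obtain ⟨w, hwmem, hw⟩ :=
      intermediate_value_Icc' h2t.le hcont' ⟨h'.le, hgt₂.le⟩
    have hwT : w ∈ T := ⟨by linarith [hwmem.1, ht₂.1], hw⟩
    have : c ≤ w := csInf_le hTbdd hwT
    linarith [hwmem.2]
  · have : t ∈ T := ⟨htA, h'⟩
    have := csInf_le hTbdd this
    linarith

lemma bi_strict (hb : IsEnum g b) (i : ℕ) : IsStrictLocalMin g (b i) :=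
  (hb.2 (b i)).2 ⟨i, rfl⟩

lemma exc_strict (hg : IsCRT g) {β : ℝ} (hβ : IsStrictLocalMin g β) :
    ∀ t ∈ Ioo (aPt g β) (cPt g β), t ≠ β → g β < g t := by
  intro t ht hne
  rcases lt_trichotomy t β with h | h | h
  · exact (aPt_spec hg hβ).2.2 t ⟨ht.1, h⟩
  · exact absurd h hne
  · exact (cPt_spec hg hβ).2.2 t ⟨h, ht.2⟩

lemma exc_lower (hg : IsCRT g) {β : ℝ} (hβ : IsStrictLocalMin g β) :
    ∀ t ∈ Icc (aPt g β) (cPt g β), g β ≤ g t := by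
  intro t ht
  rcases eq_or_lt_of_le ht.1 with h | h
  · rw [← h, (aPt_spec hg hβ).2.1]
  · rcases eq_or_lt_of_le ht.2 with h' | h'
    · rw [h', (cPt_spec hg hβ).2.1]
    · rcases eq_or_ne t β with rfl | hne
      · exact le_rfl
      · exact (exc_strict hg hβ t ⟨h, h'⟩ hne).le

lemma aPt_mem (hg : IsCRT g) {β : ℝ} (hβ : IsStrictLocalMin g β) :
    aPt g β ∈ Ioo (0:ℝ) β := (aPt_spec hg hβ).1

lemma cPt_mem (hg : IsCRT g) {β : ℝ} (hβ : IsStrictLocalMin g β) :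
    cPt g β ∈ Ioo β (1:ℝ) := (cPt_spec hg hβ).1

lemma mrca_unique {β β' x y : ℝ} (h : IsMrca g β x y) (h' : IsMrca g β' x y) :
    β = β' := by
  obtain ⟨_, hβ, _, hmin, huniq⟩ := h
  obtain ⟨_, hβ', _, hmin', huniq'⟩ := h'
  have h1 : g β ≤ g β' := hmin β' ⟨hβ'.1.le, hβ'.2.le⟩
  have h2 : g β' ≤ g β := hmin' β ⟨hβ.1.le, hβ.2.le⟩
  exact (huniq β' ⟨hβ'.1.le, hβ'.2.le⟩ (le_antisymm h2 h1)).symm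

/-- Position of the endpoints of an mrca pair relative to the excursion interval. -/
lemma mrca_pos (hg : IsCRT g) {β x y : ℝ} (h : IsMrca g β x y) :
    x ∈ Ioo (aPt g β) β ∧ y ∈ Ioo β (cPt g β) := by
  obtain ⟨hxy, ⟨hx, hy⟩, hstrict, hmin, huniq⟩ := h
  have hgx : g β < g x := by
    rcases lt_or_eq_of_le (hmin x ⟨le_rfl, hxy.le⟩) with h | h
    · exact h
    · exact absurd (huniq x ⟨le_rfl, hxy.le⟩ h.symm) (ne_of_lt hx)
  have hgy : g β < g y := by
    rcases lt_or_eq_of_le (hmin y ⟨hxy.le, le_rfl⟩) with h | h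
    · exact h
    · exact absurd (huniq y ⟨hxy.le, le_rfl⟩ h.symm) (ne_of_gt hy)
  constructor
  · refine ⟨?_, hx⟩
    by_contra hc
    push_neg at hc
    -- aPt ∈ [x, β) would have g = g β contradicting strict minimality on [x,y]
    have ha := aPt_spec hg hstrict
    have haIcc : aPt g β ∈ Icc x y := ⟨hc, by linarith [ha.1.2]⟩
    have := huniq _ haIcc ha.2.1
    linarith [ha.1.2, this ▸ ha.1.2]
  · refine ⟨hy, ?_⟩
    by_contra hc
    push_neg at hc
    have hcs := cPt_spec hg hstrict
    have hcIcc : cPt g β ∈ Icc x y := ⟨by linarith [hcs.1.1], hc⟩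
    have := huniq _ hcIcc hcs.2.1
    linarith [hcs.1.1, this ▸ hcs.1.1]

/-- Two points on opposite sides of the interval of `b i` have mrca `b i`. -/
lemma mrca_of_sides (hg : IsCRT g) (hb : IsEnum g b) {i : ℕ} {u v : ℝ}
    (hu : u ∈ Ioo (aI g b i) (b i)) (hv : v ∈ Ioo (b i) (cI g b i)) :
    IsMrca g (b i) u v := by
  have hβ := bi_strict hb i
  have huv : u < v := lt_trans hu.2 hv.1
  refine ⟨huv, ⟨hu.2, hv.1⟩, hβ, ?_, ?_⟩
  · intro t ht
    exact exc_lower hg hβ t ⟨le_trans hu.1.le ht.1, le_trans ht.2 hv.2.le⟩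
  · intro t ht htg
    by_contra hne
    have : g (b i) < g t :=
      exc_strict hg hβ t ⟨lt_of_lt_of_le hu.1 ht.1, lt_of_le_of_lt ht.2 hv.2⟩ hne
    rw [htg] at this; exact lt_irrefl _ this

/-- A strict local minimum is not a leaf. -/
lemma strict_not_leaf {β : ℝ} (hβ : IsStrictLocalMin g β) :
    ¬ NotOneSidedMin g β := by
  obtain ⟨hm, ε₀, hε₀, hstrict⟩ := hβ
  rintro ⟨-, h⟩
  obtain ⟨⟨x₁, hx₁, hgx₁⟩, -⟩ := h ε₀ hε₀
  have : g β < g x₁ := hstrict x₁ ⟨hx₁.1, by linarith [hx₁.2]⟩ (ne_of_lt hx₁.2)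
  linarith

lemma aPt_not_leaf (hg : IsCRT g) {β : ℝ} (hβ : IsStrictLocalMin g β) :
    ¬ NotOneSidedMin g (aPt g β) := by
  rintro ⟨-, h⟩
  have ha := aPt_spec hg hβ
  obtain ⟨-, ⟨x₂, hx₂, hgx₂⟩⟩ := h (β - aPt g β) (by linarith [ha.1.2])
  have hx₂m : x₂ ∈ Ioo (aPt g β) β := ⟨hx₂.1, by linarith [hx₂.2]⟩
  have := ha.2.2 x₂ hx₂m
  rw [ha.2.1] at hgx₂
  linarith

lemma cPt_not_leaf (hg : IsCRT g) {β : ℝ} (hβ : IsStrictLocalMin g β) :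
    ¬ NotOneSidedMin g (cPt g β) := by
  rintro ⟨-, h⟩
  have hc := cPt_spec hg hβ
  obtain ⟨⟨x₁, hx₁, hgx₁⟩, -⟩ := h (cPt g β - β) (by linarith [hc.1.1])
  have hx₁m : x₁ ∈ Ioo β (cPt g β) := ⟨by linarith [hx₁.1], hx₁.2⟩
  have := hc.2.2 x₁ hx₁m
  rw [hc.2.1] at hgx₁
  linarith

/-- Two distinct leaves have an mrca. -/
lemma leaf_mrca (hg : IsCRT g) (hb : IsEnum g b) {p q : ℝ}
    (hp : NotOneSidedMin g p) (hq : NotOneSidedMin g q) (hpq : p < q) :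
    ∃ i, IsMrca g (b i) p q := by
  obtain ⟨⟨hp0, hp1⟩, hpl⟩ := hp
  obtain ⟨⟨hq0, hq1⟩, hql⟩ := hq
  have hsub : Icc p q ⊆ Icc (0:ℝ) 1 := Icc_subset_Icc hp0.le hq1.le
  have hcont : ContinuousOn g (Icc p q) := hg.cont.mono hsub
  obtain ⟨m, hmmem, hmmin⟩ :=
    isCompact_Icc.exists_isMinOn ⟨p, le_rfl, hpq.le⟩ hcont
  -- min value < g p and < g q
  obtain ⟨-, x₂, hx₂, hgx₂⟩ := hpl (q - p) (by linarith)
  have hx₂m : x₂ ∈ Icc p q := ⟨hx₂.1.le, by linarith [hx₂.2]⟩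
  have hmp : g m < g p := lt_of_le_of_lt (hmmin hx₂m) hgx₂
  obtain ⟨⟨x₁, hx₁, hgx₁⟩, -⟩ := hql (q - p) (by linarith)
  have hx₁m : x₁ ∈ Icc p q := ⟨by linarith [hx₁.1], hx₁.2.le⟩
  have hmq : g m < g q := lt_of_le_of_lt (hmmin hx₁m) hgx₁
  have hmIoo : m ∈ Ioo p q := by
    rcases eq_or_lt_of_le hmmem.1 with h | h
    · exfalso; rw [← h] at hmp; exact lt_irrefl _ hmp
    · rcases eq_or_lt_of_le hmmem.2 with h' | h'
      · exfalso; rw [h'] at hmq; exact lt_irrefl _ hmq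
      · exact ⟨h, h'⟩
  -- any minimizer in the open interval is an inner local min
  have hinner : ∀ t ∈ Ioo p q, IsMinOn g (Icc p q) t → IsInnerLocalMin g t := by
    intro t ht htmin
    refine ⟨⟨lt_trans hp0 ht.1, lt_trans ht.2 hq1⟩,
      min (t - p) (q - t), lt_min (by linarith [ht.1]) (by linarith [ht.2]), ?_⟩
    intro x hx
    apply htmin
    constructor
    · have := min_le_left (t-p) (q-t); linarith [hx.1]
    · have := min_le_right (t-p) (q-t); linarith [hx.2]
  have hminner : IsInnerLocalMin g m := hinner m hmIoo hmmin
  have hmstrict : IsStrictLocalMin g m := strict_of_inner hg hminner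
  obtain ⟨i, hi⟩ := (hb.2 m).1 hmstrict
  refine ⟨i, hi ▸ ⟨hpq, hmIoo, hmstrict, fun t ht => hmmin ht, ?_⟩⟩
  intro t ht htg
  -- t is also a minimizer hence an inner local min with the same value
  have htmin : IsMinOn g (Icc p q) t := by
    intro x hx
    calc g t = g m := htg
    _ ≤ g x := hmmin hx
  have htIoo : t ∈ Ioo p q := by
    constructor
    · rcases eq_or_lt_of_le ht.1 with h | h
      · exfalso; rw [← h] at htg; rw [htg] at hmp; exact lt_irrefl _ hmp
      · exact h
    · rcases eq_or_lt_of_le ht.2 with h | h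
      · exfalso; rw [h] at htg; rw [htg] at hmq; exact lt_irrefl _ hmq
      · exact h
  exact hg.distinct t m (hinner t htIoo htmin) hminner htg

/-- The "first" block of index `i` under the shuffle. -/
def Fst (g : ℝ → ℝ) (b : ℕ → ℝ) (s : ℕ → Bool) (i : ℕ) : Set ℝ :=
  if s i then Ioo (aI g b i) (b i) else Ioo (b i) (cI g b i)

/-- The "second" block of index `i` under the shuffle. -/
def Snd (g : ℝ → ℝ) (b : ℕ → ℝ) (s : ℕ → Bool) (i : ℕ) : Set ℝ :=
  if s i then Ioo (b i) (cI g b i) else Ioo (aI g b i) (b i)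

variable (g b s) in
lemma fst_snd_cases (i : ℕ) :
    (Fst g b s i = Ioo (aI g b i) (b i) ∧ Snd g b s i = Ioo (b i) (cI g b i)) ∨
    (Fst g b s i = Ioo (b i) (cI g b i) ∧ Snd g b s i = Ioo (aI g b i) (b i)) := by
  by_cases h : s i
  · left; constructor <;> simp [Fst, Snd, h]
  · right; constructor <;> simp [Fst, Snd, h]

lemma aI_lt (hg : IsCRT g) (hb : IsEnum g b) (i : ℕ) : aI g b i < b i :=
  (aPt_mem hg (bi_strict hb i)).2

lemma lt_cI (hg : IsCRT g) (hb : IsEnum g b) (i : ℕ) : b i < cI g b i :=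
  (cPt_mem hg (bi_strict hb i)).1

lemma g_aI (hg : IsCRT g) (hb : IsEnum g b) (i : ℕ) : g (aI g b i) = g (b i) :=
  (aPt_spec hg (bi_strict hb i)).2.1

lemma g_cI (hg : IsCRT g) (hb : IsEnum g b) (i : ℕ) : g (cI g b i) = g (b i) :=
  (cPt_spec hg (bi_strict hb i)).2.1

lemma fst_subset (hg : IsCRT g) (hb : IsEnum g b) (i : ℕ) :
    Fst g b s i ⊆ Ioo (aI g b i) (cI g b i) := by
  rcases fst_snd_cases g b s i with ⟨h, -⟩ | ⟨h, -⟩ <;> rw [h] <;> intro x hx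
  · exact ⟨hx.1, lt_trans hx.2 (lt_cI hg hb i)⟩
  · exact ⟨lt_trans (aI_lt hg hb i) hx.1, hx.2⟩

lemma snd_subset (hg : IsCRT g) (hb : IsEnum g b) (i : ℕ) :
    Snd g b s i ⊆ Ioo (aI g b i) (cI g b i) := by
  rcases fst_snd_cases g b s i with ⟨-, h⟩ | ⟨-, h⟩ <;> rw [h] <;> intro x hx
  · exact ⟨lt_trans (aI_lt hg hb i) hx.1, hx.2⟩
  · exact ⟨hx.1, lt_trans hx.2 (lt_cI hg hb i)⟩

lemma fst_snd_disj {i : ℕ} {x : ℝ} (h1 : x ∈ Fst g b s i) (h2 : x ∈ Snd g b s i) :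
    False := by
  rcases fst_snd_cases g b s i with ⟨hf, hs⟩ | ⟨hf, hs⟩ <;> rw [hf] at h1 <;> rw [hs] at h2
  · exact lt_irrefl _ (lt_trans h1.2 h2.1)
  · exact lt_irrefl _ (lt_trans h2.2 h1.1)

lemma fst_eq_of_left {i : ℕ} {x : ℝ} (h : x ∈ Fst g b s i) (hx : x < b i) :
    Fst g b s i = Ioo (aI g b i) (b i) := by
  rcases fst_snd_cases g b s i with ⟨hf, -⟩ | ⟨hf, -⟩
  · exact hf
  · rw [hf] at h; exact absurd h.1 (not_lt.2 hx.le)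

lemma fst_eq_of_right {i : ℕ} {x : ℝ} (h : x ∈ Fst g b s i) (hx : b i < x) :
    Fst g b s i = Ioo (b i) (cI g b i) := by
  rcases fst_snd_cases g b s i with ⟨hf, -⟩ | ⟨hf, -⟩
  · rw [hf] at h; exact absurd h.2 (not_lt.2 hx.le)
  · exact hf

lemma snd_eq_of_left {i : ℕ} {x : ℝ} (h : x ∈ Snd g b s i) (hx : x < b i) :
    Snd g b s i = Ioo (aI g b i) (b i) := by
  rcases fst_snd_cases g b s i with ⟨-, hs⟩ | ⟨-, hs⟩
  · rw [hs] at h; exact absurd h.1 (not_lt.2 hx.le)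
  · exact hs

lemma snd_eq_of_right {i : ℕ} {x : ℝ} (h : x ∈ Snd g b s i) (hx : b i < x) :
    Snd g b s i = Ioo (b i) (cI g b i) := by
  rcases fst_snd_cases g b s i with ⟨-, hs⟩ | ⟨-, hs⟩
  · exact hs
  · rw [hs] at h; exact absurd h.2 (not_lt.2 hx.le)

/-- Characterization of the shuffled order in terms of the blocks. -/
lemma tri_iff (hg : IsCRT g) (hb : IsEnum g b) {u v : ℝ} :
    Tri g b s u v ↔ ∃ i, u ∈ Fst g b s i ∧ v ∈ Snd g b s i := by
  constructor
  · rintro ⟨i, ⟨hM, hsi⟩ | ⟨hM, hsi⟩⟩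
    · obtain ⟨h1, h2⟩ := mrca_pos hg hM
      exact ⟨i, by simp [Fst, hsi]; exact h1, by simp [Snd, hsi]; exact h2⟩
    · obtain ⟨h1, h2⟩ := mrca_pos hg hM
      exact ⟨i, by simp [Fst, hsi]; exact h2, by simp [Snd, hsi]; exact h1⟩
  · rintro ⟨i, hu, hv⟩
    by_cases hsi : s i
    · simp only [Fst, Snd, hsi, if_true] at hu hv
      exact ⟨i, Or.inl ⟨mrca_of_sides hg hb hu hv, hsi⟩⟩
    · simp only [Fst, Snd, hsi, if_false] at hu hv
      exact ⟨i, Or.inr ⟨mrca_of_sides hg hb hv hu, Bool.eq_false_iff.2 hsi⟩⟩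

/-- Nesting: the deeper excursion interval lies inside one side of the shallower one. -/
lemma nestSide (hg : IsCRT g) (hb : IsEnum g b) {i j : ℕ} {w : ℝ}
    (hgl : g (b j) < g (b i))
    (hw : w ∈ Ioo (aI g b i) (cI g b i)) (hwj : w ∈ Ioo (aI g b j) (cI g b j)) :
    Icc (aI g b i) (cI g b i) ⊆ Ioo (aI g b j) (b j) ∨
    Icc (aI g b i) (cI g b i) ⊆ Ioo (b j) (cI g b j) := by
  have hβi := bi_strict hb i
  have hβj := bi_strict hb j
  have hai := aPt_spec hg hβi
  have haj := aPt_spec hg hβj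
  have hci := cPt_spec hg hβi
  have hcj := cPt_spec hg hβj
  have hlow : ∀ t ∈ Icc (aI g b i) (cI g b i), g (b j) < g t := by
    intro t ht
    exact lt_of_lt_of_le hgl (exc_lower hg hβi t ht)
  have haij : aI g b j < aI g b i := by
    by_contra hc
    push_neg at hc
    have hmem : aI g b j ∈ Icc (aI g b i) (cI g b i) :=
      ⟨hc, le_trans (le_of_lt hwj.1) (le_of_lt hw.2)⟩
    have := hlow _ hmem
    rw [g_aI hg hb j] at this
    exact lt_irrefl _ this
  have hcij : cI g b i < cI g b j := by
    by_contra hc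
    push_neg at hc
    have hmem : cI g b j ∈ Icc (aI g b i) (cI g b i) :=
      ⟨le_trans (le_of_lt hw.1) (le_of_lt hwj.2), hc⟩
    have := hlow _ hmem
    rw [g_cI hg hb j] at this
    exact lt_irrefl _ this
  have hbj : b j < aI g b i ∨ cI g b i < b j := by
    by_contra hc
    push_neg at hc
    have := hlow (b j) ⟨hc.1, hc.2⟩
    exact lt_irrefl _ this
  rcases hbj with h | h
  · right
    intro t ht
    exact ⟨lt_of_lt_of_le h ht.1, lt_of_le_of_lt ht.2 hcij⟩
  · left
    intro t ht
    exact ⟨lt_of_lt_of_le haij ht.1, lt_of_le_of_lt ht.2 h⟩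

lemma gb_ne (hg : IsCRT g) (hb : IsEnum g b) {i j : ℕ} (hij : i ≠ j) :
    g (b i) ≠ g (b j) := by
  intro h
  have := hg.distinct (b i) (b j) (inner_of_strict (bi_strict hb i))
    (inner_of_strict (bi_strict hb j)) h
  exact hij (hb.1 this)

/-- Transitivity of the shuffled order. -/
lemma tri_trans (hg : IsCRT g) (hb : IsEnum g b) {v t u : ℝ}
    (h1 : Tri g b s v t) (h2 : Tri g b s t u) : Tri g b s v u := by
  obtain ⟨i, hvF, htS⟩ := (tri_iff hg hb).1 h1
  obtain ⟨j, htF, huS⟩ := (tri_iff hg hb).1 h2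
  have hij : i ≠ j := by
    rintro rfl
    exact fst_snd_disj htF htS
  rcases lt_trichotomy (g (b j)) (g (b i)) with hgl | hgl | hgl
  · -- interval of i nests inside one side of j ; v is on the same side as t
    have hside := nestSide hg hb hgl (snd_subset hg hb i htS) (fst_subset hg hb j htF)
    refine (tri_iff hg hb).2 ⟨j, ?_, huS⟩
    rcases hside with hs | hs
    · have htmem : t ∈ Ioo (aI g b j) (b j) :=
        hs (Ioo_subset_Icc_self (snd_subset hg hb i htS))
      have hFj := fst_eq_of_left htF htmem.2
      rw [hFj]
      exact hs (Ioo_subset_Icc_self (fst_subset hg hb i hvF))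
    · have htmem : t ∈ Ioo (b j) (cI g b j) :=
        hs (Ioo_subset_Icc_self (snd_subset hg hb i htS))
      have hFj := fst_eq_of_right htF htmem.1
      rw [hFj]
      exact hs (Ioo_subset_Icc_self (fst_subset hg hb i hvF))
  · exact absurd hgl.symm (gb_ne hg hb hij)
  · -- interval of j nests inside one side of i ; u is on the same side as t
    have hside := nestSide hg hb hgl (fst_subset hg hb j htF) (snd_subset hg hb i htS)
    refine (tri_iff hg hb).2 ⟨i, hvF, ?_⟩
    rcases hside with hs | hs
    · have htmem : t ∈ Ioo (aI g b i) (b i) :=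
        hs (Ioo_subset_Icc_self (fst_subset hg hb j htF))
      have hSi := snd_eq_of_left htS htmem.2
      rw [hSi]
      exact hs (Ioo_subset_Icc_self (snd_subset hg hb j huS))
    · have htmem : t ∈ Ioo (b i) (cI g b i) :=
        hs (Ioo_subset_Icc_self (fst_subset hg hb j htF))
      have hSi := snd_eq_of_right htS htmem.1
      rw [hSi]
      exact hs (Ioo_subset_Icc_self (snd_subset hg hb j huS))

/-- Asymmetry of the shuffled order. -/
lemma tri_asymm (hg : IsCRT g) (hb : IsEnum g b) {p q : ℝ}
    (h1 : Tri g b s p q) (h2 : Tri g b s q p) : False := by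
  obtain ⟨i, hpF, hqS⟩ := (tri_iff hg hb).1 h1
  obtain ⟨j, hqF, hpS⟩ := (tri_iff hg hb).1 h2
  have hij : i ≠ j := by
    rintro rfl
    exact fst_snd_disj hqF hqS
  rcases lt_trichotomy (g (b j)) (g (b i)) with hgl | hgl | hgl
  · have hside := nestSide hg hb hgl (snd_subset hg hb i hqS) (fst_subset hg hb j hqF)
    rcases hside with hs | hs
    · have hqmem : q ∈ Ioo (aI g b j) (b j) :=
        hs (Ioo_subset_Icc_self (snd_subset hg hb i hqS))
      have hFj := fst_eq_of_left hqF hqmem.2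
      have hpmem : p ∈ Fst g b s j := by
        rw [hFj]; exact hs (Ioo_subset_Icc_self (fst_subset hg hb i hpF))
      exact fst_snd_disj hpmem hpS
    · have hqmem : q ∈ Ioo (b j) (cI g b j) :=
        hs (Ioo_subset_Icc_self (snd_subset hg hb i hqS))
      have hFj := fst_eq_of_right hqF hqmem.1
      have hpmem : p ∈ Fst g b s j := by
        rw [hFj]; exact hs (Ioo_subset_Icc_self (fst_subset hg hb i hpF))
      exact fst_snd_disj hpmem hpS
  · exact (gb_ne hg hb hij) hgl.symm
  · have hside := nestSide hg hb hgl (snd_subset hg hb j hpS) (fst_subset hg hb i hpF)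
    rcases hside with hs | hs
    · have hpmem : p ∈ Ioo (aI g b i) (b i) :=
        hs (Ioo_subset_Icc_self (snd_subset hg hb j hpS))
      have hFi := fst_eq_of_left hpF hpmem.2
      have hqmem : q ∈ Fst g b s i := by
        rw [hFi]; exact hs (Ioo_subset_Icc_self (fst_subset hg hb j hqF))
      exact fst_snd_disj hqmem hqS
    · have hpmem : p ∈ Ioo (b i) (cI g b i) :=
        hs (Ioo_subset_Icc_self (snd_subset hg hb j hpS))
      have hFi := fst_eq_of_right hpF hpmem.1
      have hqmem : q ∈ Fst g b s i := by
        rw [hFi]; exact hs (Ioo_subset_Icc_self (fst_subset hg hb j hqF))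
      exact fst_snd_disj hqmem hqS

/-- Totality of the shuffled order on leaves. -/
lemma tri_total (hg : IsCRT g) (hb : IsEnum g b) {p q : ℝ}
    (hp : NotOneSidedMin g p) (hq : NotOneSidedMin g q) (hpq : p ≠ q) :
    Tri g b s p q ∨ Tri g b s q p := by
  rcases lt_or_gt_of_ne hpq with h | h
  · obtain ⟨i, hM⟩ := leaf_mrca hg hb hp hq h
    obtain ⟨h1, h2⟩ := mrca_pos hg hM
    by_cases hsi : s i
    · exact Or.inl ((tri_iff hg hb).2 ⟨i, by simp [Fst, hsi]; exact h1,
        by simp [Snd, hsi]; exact h2⟩)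
    · exact Or.inr ((tri_iff hg hb).2 ⟨i, by simp [Fst, hsi]; exact h2,
        by simp [Snd, hsi]; exact h1⟩)
  · obtain ⟨i, hM⟩ := leaf_mrca hg hb hq hp h
    obtain ⟨h1, h2⟩ := mrca_pos hg hM
    by_cases hsi : s i
    · exact Or.inr ((tri_iff hg hb).2 ⟨i, by simp [Fst, hsi]; exact h1,
        by simp [Snd, hsi]; exact h2⟩)
    · exact Or.inl ((tri_iff hg hb).2 ⟨i, by simp [Fst, hsi]; exact h2,
        by simp [Snd, hsi]; exact h1⟩)

/-- Transfer of mrca across the excursion interval: left outside point. -/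
lemma mrca_transfer_left (hg : IsCRT g) (hb : IsEnum g b) {i : ℕ} {β' u t : ℝ}
    (hu : u < aI g b i) (ht : t ∈ Ioo (aI g b i) (cI g b i)) :
    IsMrca g β' u t ↔ IsMrca g β' u (aI g b i) := by
  have hβi := bi_strict hb i
  have hga := g_aI hg hb i
  have hat : aI g b i < t := ht.1
  constructor
  · rintro ⟨hut, ⟨h1, h2⟩, hstr, hmin, huni⟩
    have haIcc : aI g b i ∈ Icc u t := ⟨hu.le, hat.le⟩
    have hle : g β' ≤ g (aI g b i) := hmin _ haIcc
    have hlt : g β' < g (b i) := by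
      rcases lt_or_eq_of_le hle with h | h
      · rw [hga] at h; exact h
      · exfalso
        have haβ' : aI g b i = β' := huni _ haIcc h.symm
        have hstr' : IsStrictLocalMin g (aI g b i) := haβ' ▸ hstr
        have := hg.distinct (aI g b i) (b i) (inner_of_strict hstr')
          (inner_of_strict hβi) hga
        exact absurd this (ne_of_lt (aI_lt hg hb i))
    have hβ'a : β' < aI g b i := by
      by_contra hc
      push_neg at hc
      have : β' ∈ Icc (aI g b i) (cI g b i) := ⟨hc, le_trans h2.le ht.2.le⟩
      have := exc_lower hg hβi β' this
      linarith
    refine ⟨hu, ⟨h1, hβ'a⟩, hstr, fun t' ht' => hmin t' ⟨ht'.1, le_trans ht'.2 hat.le⟩,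
      fun t' ht' => huni t' ⟨ht'.1, le_trans ht'.2 hat.le⟩⟩
  · rintro ⟨hua, ⟨h1, h2⟩, hstr, hmin, huni⟩
    have hle : g β' ≤ g (aI g b i) := hmin _ ⟨hua.le, le_rfl⟩
    have hlt : g β' < g (aI g b i) := by
      rcases lt_or_eq_of_le hle with h | h
      · exact h
      · exact absurd (huni _ ⟨hua.le, le_rfl⟩ h.symm) (ne_of_gt h2)
    refine ⟨lt_trans hua hat, ⟨h1, lt_trans h2 hat⟩, hstr, ?_, ?_⟩
    · intro t' ht'
      by_cases hc : t' ≤ aI g b i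
      · exact hmin t' ⟨ht'.1, hc⟩
      · push_neg at hc
        have : t' ∈ Icc (aI g b i) (cI g b i) := ⟨hc.le, le_trans ht'.2 ht.2.le⟩
        have := exc_lower hg hβi t' this
        linarith [hga]
    · intro t' ht' htg
      by_cases hc : t' ≤ aI g b i
      · exact huni t' ⟨ht'.1, hc⟩ htg
      · exfalso
        push_neg at hc
        have : t' ∈ Icc (aI g b i) (cI g b i) := ⟨hc.le, le_trans ht'.2 ht.2.le⟩
        have := exc_lower hg hβi t' this
        rw [← hga] at this
        linarith [htg ▸ hlt]

/-- Transfer of mrca across the excursion interval: right outside point. -/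
lemma mrca_transfer_right (hg : IsCRT g) (hb : IsEnum g b) {i : ℕ} {β' u t : ℝ}
    (hu : cI g b i < u) (ht : t ∈ Ioo (aI g b i) (cI g b i)) :
    IsMrca g β' t u ↔ IsMrca g β' (aI g b i) u := by
  have hβi := bi_strict hb i
  have hga := g_aI hg hb i
  have hgc := g_cI hg hb i
  have htc : t < cI g b i := ht.2
  have hac : aI g b i < cI g b i := lt_trans (aI_lt hg hb i) (lt_cI hg hb i)
  constructor
  · rintro ⟨htu, ⟨h1, h2⟩, hstr, hmin, huni⟩
    have hcIcc : cI g b i ∈ Icc t u := ⟨htc.le, hu.le⟩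
    have hle : g β' ≤ g (cI g b i) := hmin _ hcIcc
    have hlt : g β' < g (b i) := by
      rcases lt_or_eq_of_le hle with h | h
      · rw [hgc] at h; exact h
      · exfalso
        have hcβ' : cI g b i = β' := huni _ hcIcc h.symm
        have hstr' : IsStrictLocalMin g (cI g b i) := hcβ' ▸ hstr
        have := hg.distinct (cI g b i) (b i) (inner_of_strict hstr')
          (inner_of_strict hβi) hgc
        exact absurd this (ne_of_gt (lt_cI hg hb i))
    have hβ'c : cI g b i < β' := by
      by_contra hc
      push_neg at hc
      have : β' ∈ Icc (aI g b i) (cI g b i) := ⟨le_trans ht.1.le h1.le, hc⟩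
      have := exc_lower hg hβi β' this
      linarith
    refine ⟨lt_trans hac hu, ⟨lt_of_le_of_lt hac.le hβ'c, h2⟩, hstr, ?_, ?_⟩
    · intro t' ht'
      by_cases hc : t' ≤ cI g b i
      · have : t' ∈ Icc (aI g b i) (cI g b i) := ⟨ht'.1, hc⟩
        have := exc_lower hg hβi t' this
        linarith
      · push_neg at hc
        exact hmin t' ⟨le_trans htc.le hc.le, ht'.2⟩
    · intro t' ht' htg
      by_cases hc : t' ≤ cI g b i
      · exfalso
        have : t' ∈ Icc (aI g b i) (cI g b i) := ⟨ht'.1, hc⟩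
        have := exc_lower hg hβi t' this
        rw [htg] at this
        linarith
      · push_neg at hc
        exact huni t' ⟨le_trans htc.le hc.le, ht'.2⟩ htg
  · rintro ⟨hau, ⟨h1, h2⟩, hstr, hmin, huni⟩
    have hle : g β' ≤ g (aI g b i) := hmin _ ⟨le_rfl, hau.le⟩
    have hlt : g β' < g (aI g b i) := by
      rcases lt_or_eq_of_le hle with h | h
      · exact h
      · exact absurd (huni _ ⟨le_rfl, hau.le⟩ h.symm) (ne_of_lt h1)
    have hβ'c : cI g b i < β' := by
      by_contra hc
      push_neg at hc
      have : β' ∈ Icc (aI g b i) (cI g b i) := ⟨h1.le, hc⟩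
      have := exc_lower hg hβi β' this
      rw [← hga] at this
      linarith
    refine ⟨lt_trans htc hu, ⟨lt_trans htc hβ'c, h2⟩, hstr, ?_, ?_⟩
    · intro t' ht'
      by_cases hc : t' ≤ cI g b i
      · have : t' ∈ Icc (aI g b i) (cI g b i) := ⟨le_trans ht.1.le ht'.1, hc⟩
        have := exc_lower hg hβi t' this
        linarith [hga]
      · push_neg at hc
        exact hmin t' ⟨le_trans hac.le hc.le, ht'.2⟩
    · intro t' ht' htg
      by_cases hc : t' ≤ cI g b i
      · exfalso
        have : t' ∈ Icc (aI g b i) (cI g b i) := ⟨le_trans ht.1.le ht'.1, hc⟩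
        have := exc_lower hg hβi t' this
        rw [← hga] at this
        rw [htg] at this
        linarith
      · push_neg at hc
        exact huni t' ⟨le_trans hac.le hc.le, ht'.2⟩ htg

/-- Outside points compare with inside points exactly as with the left endpoint. -/
lemma tri_outside (hg : IsCRT g) (hb : IsEnum g b) {i : ℕ} {u t : ℝ}
    (hu : u ∉ Icc (aI g b i) (cI g b i)) (ht : t ∈ Ioo (aI g b i) (cI g b i)) :
    Tri g b s u t ↔ Tri g b s u (aI g b i) := by
  rw [mem_Icc, not_and_or, not_le, not_le] at hu
  rcases hu with hu | hu
  · constructor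
    · rintro ⟨j, ⟨hM, hsj⟩ | ⟨hM, hsj⟩⟩
      · exact ⟨j, Or.inl ⟨(mrca_transfer_left hg hb hu ht).1 hM, hsj⟩⟩
      · exact absurd hM.1 (not_lt.2 (le_trans hu.le ht.1.le))
    · rintro ⟨j, ⟨hM, hsj⟩ | ⟨hM, hsj⟩⟩
      · exact ⟨j, Or.inl ⟨(mrca_transfer_left hg hb hu ht).2 hM, hsj⟩⟩
      · exact absurd hM.1 (not_lt.2 hu.le)
  · constructor
    · rintro ⟨j, ⟨hM, hsj⟩ | ⟨hM, hsj⟩⟩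
      · exact absurd hM.1 (not_lt.2 (le_trans ht.2.le hu.le))
      · exact ⟨j, Or.inr ⟨(mrca_transfer_right hg hb hu ht).1 hM, hsj⟩⟩
    · rintro ⟨j, ⟨hM, hsj⟩ | ⟨hM, hsj⟩⟩
      · exact absurd hM.1 (not_lt.2 (le_trans (lt_trans (aI_lt hg hb i) (lt_cI hg hb i)).le hu.le))
      · exact ⟨j, Or.inr ⟨(mrca_transfer_right hg hb hu ht).2 hM, hsj⟩⟩

/-- Nothing inside the excursion interval lies (strictly) before its left endpoint. -/
lemma not_tri_inside_aI (hg : IsCRT g) (hb : IsEnum g b) {i : ℕ} {u : ℝ}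
    (hui : u ∈ Icc (aI g b i) (cI g b i)) : ¬ Tri g b s u (aI g b i) := by
  rintro ⟨j, ⟨hM, hsj⟩ | ⟨hM, hsj⟩⟩
  · exact absurd hM.1 (not_lt.2 hui.1)
  · -- IsMrca (b j) (aI i) u with u ∈ (aI, cI]
    obtain ⟨hau, ⟨h1, h2⟩, hstr, hmin, huni⟩ := hM
    have hga := g_aI hg hb i
    have hβj : b j ∈ Icc (aI g b i) (cI g b i) := ⟨h1.le, le_trans h2.le hui.2⟩
    have hlow := exc_lower hg (bi_strict hb i) _ hβj
    have hup : g (b j) ≤ g (aI g b i) := hmin _ ⟨le_rfl, hau.le⟩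
    have : g (aI g b i) = g (b j) := by rw [hga]; linarith
    have := huni _ ⟨le_rfl, hau.le⟩ this
    exact absurd this (ne_of_lt h1)

/-! ### The leaf set -/

def Lam (g : ℝ → ℝ) : Set ℝ := {x | NotOneSidedMin g x}

def leftW (g : ℝ → ℝ) (n : ℕ) (q : ℚ) : Set ℝ :=
  {x | x ∈ Ioo (0:ℝ) 1 ∧ (q:ℝ) ∈ Ioo (0:ℝ) 1 ∧ (q:ℝ) < x ∧ x < (q:ℝ) + 1/(n+1) ∧ g (q:ℝ) < g x}

def rightW (g : ℝ → ℝ) (n : ℕ) (q : ℚ) : Set ℝ :=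
  {x | x ∈ Ioo (0:ℝ) 1 ∧ (q:ℝ) ∈ Ioo (0:ℝ) 1 ∧ x < (q:ℝ) ∧ (q:ℝ) < x + 1/(n+1) ∧ g (q:ℝ) < g x}

lemma measurable_above (hg : IsCRT g) (y : ℝ) :
    MeasurableSet (Ioo (0:ℝ) 1 ∩ g ⁻¹' Ioi y) :=
  (ContinuousOn.isOpen_inter_preimage (hg.cont.mono Ioo_subset_Icc_self)
    isOpen_Ioo isOpen_Ioi).measurableSet

lemma measurable_leftW (hg : IsCRT g) (n : ℕ) (q : ℚ) :
    MeasurableSet (leftW g n q) := by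
  by_cases hq : (q:ℝ) ∈ Ioo (0:ℝ) 1
  · rw [mem_Ioo] at hq
    have : leftW g n q = (Ioo (0:ℝ) 1 ∩ g ⁻¹' Ioi (g (q:ℝ))) ∩ Ioo (q:ℝ) ((q:ℝ) + 1/(n+1)) := by
      ext x
      simp only [leftW, mem_setOf_eq, mem_inter_iff, mem_preimage, mem_Ioi, mem_Ioo]
      tauto
    rw [this]
    exact (measurable_above hg _).inter measurableSet_Ioo
  · have : leftW g n q = ∅ := by
      ext x; simp only [leftW, mem_setOf_eq, mem_empty_iff_false, iff_false]
      tauto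
    rw [this]; exact MeasurableSet.empty

lemma measurable_rightW (hg : IsCRT g) (n : ℕ) (q : ℚ) :
    MeasurableSet (rightW g n q) := by
  by_cases hq : (q:ℝ) ∈ Ioo (0:ℝ) 1
  · rw [mem_Ioo] at hq
    have : rightW g n q = (Ioo (0:ℝ) 1 ∩ g ⁻¹' Ioi (g (q:ℝ))) ∩ Ioo ((q:ℝ) - 1/(n+1)) (q:ℝ) := by
      ext x
      simp only [rightW, mem_setOf_eq, mem_inter_iff, mem_preimage, mem_Ioi, mem_Ioo]
      constructor
      · rintro ⟨h1, h2, h3, h4, h5⟩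
        exact ⟨⟨h1, h5⟩, by linarith, h3⟩
      · rintro ⟨⟨h1, h5⟩, h3, h4⟩
        exact ⟨h1, mem_Ioo.2 hq, h4, by linarith, h5⟩
    rw [this]
    exact (measurable_above hg _).inter measurableSet_Ioo
  · have : rightW g n q = ∅ := by
      ext x; simp only [rightW, mem_setOf_eq, mem_empty_iff_false, iff_false]
      tauto
    rw [this]; exact MeasurableSet.empty

lemma lam_eq (hg : IsCRT g) :
    Lam g = ⋂ n : ℕ, ((⋃ q : ℚ, leftW g n q) ∩ (⋃ q : ℚ, rightW g n q)) := by
  ext x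
  simp only [Lam, mem_setOf_eq, mem_iInter, mem_inter_iff, mem_iUnion]
  constructor
  · rintro ⟨hx01, h⟩
    intro n
    have hn : (0:ℝ) < 1/((n:ℝ)+1) := by positivity
    constructor
    · -- left witness
      set ε := min (1/((n:ℝ)+1)) x with hε
      have hεpos : 0 < ε := lt_min hn hx01.1
      have hεle : ε ≤ 1/((n:ℝ)+1) := min_le_left _ _
      have hεx : ε ≤ x := min_le_right _ _
      obtain ⟨⟨x₁, hx₁, hgx₁⟩, -⟩ := h ε hεpos
      have hx₁0 : 0 < x₁ := by linarith [hx₁.1]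
      have hx₁1 : x₁ < 1 := lt_trans hx₁.2 hx01.2
      have hcont : ContinuousAt g x₁ := contAt hg ⟨hx₁0, hx₁1⟩
      have hnhds : g ⁻¹' Iio (g x) ∈ nhds x₁ :=
        hcont.preimage_mem_nhds (isOpen_Iio.mem_nhds hgx₁)
      obtain ⟨δ, hδpos, hδ⟩ := Metric.mem_nhds_iff.1 hnhds
      obtain ⟨q, hq1, hq2⟩ := exists_rat_btwn
        (show max (x - ε) (x₁ - δ) < x₁ from max_lt hx₁.1 (by linarith))
      have hqx : (q:ℝ) < x := lt_trans hq2 hx₁.2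
      have hqlb : x - ε < q := lt_of_le_of_lt (le_max_left _ _) hq1
      have hq0 : (0:ℝ) < q := by linarith
      have hq1' : (q:ℝ) < 1 := lt_trans hq2 hx₁1
      have hgq : g q < g x := by
        apply hδ
        rw [Metric.mem_ball, Real.dist_eq, abs_sub_lt_iff]
        have := lt_of_le_of_lt (le_max_right (x-ε) (x₁-δ)) hq1
        constructor <;> linarith
      exact ⟨q, hx01, ⟨hq0, hq1'⟩, hqx, by linarith, hgq⟩
    · -- right witness
      set ε := min (1/((n:ℝ)+1)) (1-x) with hε
      have hεpos : 0 < ε := lt_min hn (by linarith [hx01.2])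
      have hεle : ε ≤ 1/((n:ℝ)+1) := min_le_left _ _
      have hεx : ε ≤ 1 - x := min_le_right _ _
      obtain ⟨-, ⟨x₂, hx₂, hgx₂⟩⟩ := h ε hεpos
      have hx₂0 : 0 < x₂ := lt_trans hx01.1 hx₂.1
      have hx₂1 : x₂ < 1 := by linarith [hx₂.2]
      have hcont : ContinuousAt g x₂ := contAt hg ⟨hx₂0, hx₂1⟩
      have hnhds : g ⁻¹' Iio (g x) ∈ nhds x₂ :=
        hcont.preimage_mem_nhds (isOpen_Iio.mem_nhds hgx₂)
      obtain ⟨δ, hδpos, hδ⟩ := Metric.mem_nhds_iff.1 hnhds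
      obtain ⟨q, hq1, hq2⟩ := exists_rat_btwn
        (show x₂ < min (x₂ + δ) (x + ε) from lt_min (by linarith) hx₂.2)
      have hqub1 : (q:ℝ) < x₂ + δ := lt_of_lt_of_le hq2 (min_le_left _ _)
      have hqub2 : (q:ℝ) < x + ε := lt_of_lt_of_le hq2 (min_le_right _ _)
      have hq0 : (0:ℝ) < q := lt_trans hx₂0 hq1
      have hq1' : (q:ℝ) < 1 := by linarith
      have hgq : g q < g x := by
        apply hδ
        rw [Metric.mem_ball, Real.dist_eq, abs_sub_lt_iff]
        constructor <;> linarith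
      exact ⟨q, hx01, ⟨hq0, hq1'⟩, lt_trans hx₂.1 hq1, by linarith, hgq⟩
  · intro h
    have hx01 : x ∈ Ioo (0:ℝ) 1 := by
      obtain ⟨q, hq⟩ := (h 0).1
      exact hq.1
    refine ⟨hx01, fun ε hε => ?_⟩
    obtain ⟨n, hn⟩ := exists_nat_one_div_lt hε
    constructor
    · obtain ⟨q, hq⟩ := (h n).1
      exact ⟨q, ⟨by linarith [hq.2.2.2.1], hq.2.2.1⟩, hq.2.2.2.2⟩
    · obtain ⟨q, hq⟩ := (h n).2
      exact ⟨q, ⟨hq.2.2.1, by linarith [hq.2.2.2.1]⟩, hq.2.2.2.2⟩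

lemma measurable_lam (hg : IsCRT g) : MeasurableSet (Lam g) := by
  rw [lam_eq hg]
  exact MeasurableSet.iInter fun n =>
    (MeasurableSet.iUnion (measurable_leftW hg n)).inter
      (MeasurableSet.iUnion (measurable_rightW hg n))

/-! ### The measure-theoretic layer -/

def Sset (g : ℝ → ℝ) (b : ℕ → ℝ) (s : ℕ → Bool) (t : ℝ) : Set ℝ :=
  {u ∈ Icc (0:ℝ) 1 | Tri g b s u t}

def Phi (g : ℝ → ℝ) (b : ℕ → ℝ) (s : ℕ → Bool) (t : ℝ) : ENNReal :=
  volume (Sset g b s t)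

lemma phi_eq (t : ℝ) : phi g b s t = (Phi g b s t).toReal := rfl

lemma sset_subset (t : ℝ) : Sset g b s t ⊆ Icc (0:ℝ) 1 := fun _ hu => hu.1

lemma Phi_le_one (t : ℝ) : Phi g b s t ≤ 1 := by
  refine le_trans (measure_mono (sset_subset t)) ?_
  rw [Real.volume_Icc]
  simp

lemma Phi_ne_top (t : ℝ) : Phi g b s t ≠ ⊤ :=
  fun h => by simpa [h] using Phi_le_one (g := g) (b := b) (s := s) t

lemma phi_nonneg (t : ℝ) : 0 ≤ phi g b s t := ENNReal.toReal_nonneg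

lemma phi_le_phi (hg : IsCRT g) (hb : IsEnum g b) {p q : ℝ} (h : Tri g b s p q) :
    phi g b s p ≤ phi g b s q := by
  rw [phi_eq, phi_eq]
  apply ENNReal.toReal_mono (Phi_ne_top q)
  exact measure_mono fun u hu => ⟨hu.1, tri_trans hg hb hu.2 h⟩

lemma measurable_fstSet (i : ℕ) : MeasurableSet (Fst g b s i) := by
  rcases fst_snd_cases g b s i with ⟨h, -⟩ | ⟨h, -⟩ <;> rw [h] <;> exact measurableSet_Ioo

lemma measurable_sndSet (i : ℕ) : MeasurableSet (Snd g b s i) := by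
  rcases fst_snd_cases g b s i with ⟨-, h⟩ | ⟨-, h⟩ <;> rw [h] <;> exact measurableSet_Ioo

/-- `Phi` is a measurable function. -/
lemma measurable_Phi (hg : IsCRT g) (hb : IsEnum g b) : Measurable (Phi g b s) := by
  have hW : MeasurableSet (⋃ i, (Snd g b s i) ×ˢ (Fst g b s i ∩ Icc (0:ℝ) 1)) :=
    MeasurableSet.iUnion fun i =>
      (measurable_sndSet i).prod ((measurable_fstSet i).inter measurableSet_Icc)
  have hmeas := measurable_measure_prodMk_left (ν := (volume : Measure ℝ)) hW
  have heq : Phi g b s = fun t => volume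
      (Prod.mk t ⁻¹' (⋃ i, (Snd g b s i) ×ˢ (Fst g b s i ∩ Icc (0:ℝ) 1))) := by
    funext t
    unfold Phi
    congr 1
    ext u
    simp only [mem_preimage, mem_iUnion, mem_prod, mem_inter_iff, Sset, mem_setOf_eq]
    rw [tri_iff hg hb]
    tauto
  rw [heq]
  exact hmeas

lemma measurable_phi (hg : IsCRT g) (hb : IsEnum g b) : Measurable (phi g b s) :=
  (measurable_Phi hg hb).ennreal_toReal

lemma vol_lam (hg : IsCRT g) : volume (Lam g) = 1 := hg.leaves_full

lemma lam_sub_Ioo : Lam g ⊆ Ioo (0:ℝ) 1 := fun _ hx => hx.1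

lemma vol_compl_lam (hg : IsCRT g) : volume (Icc (0:ℝ) 1 \ Lam g) = 0 := by
  have hsub : Lam g ⊆ Icc (0:ℝ) 1 := fun x hx => Ioo_subset_Icc_self hx.1
  rw [measure_diff hsub (measurable_lam hg).nullMeasurableSet
    (by rw [vol_lam hg]; exact ENNReal.one_ne_top)]
  rw [Real.volume_Icc, vol_lam hg]
  norm_num

lemma vol_inter_lam (hg : IsCRT g) {A : Set ℝ} (hA : A ⊆ Icc (0:ℝ) 1) :
    volume (A ∩ Lam g) = volume A := by
  refine le_antisymm (measure_mono inter_subset_left) ?_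
  have h1 := measure_inter_add_diff (μ := (volume : Measure ℝ)) A (measurable_lam hg)
  have h2 : volume (A \ Lam g) = 0 := by
    have : A \ Lam g ⊆ Icc (0:ℝ) 1 \ Lam g := diff_subset_diff_left hA
    exact le_antisymm (le_trans (measure_mono this) (vol_compl_lam hg).le) zero_le
  rw [h2, add_zero] at h1
  rw [h1]

lemma Phi_eq_lam (hg : IsCRT g) (t : ℝ) :
    Phi g b s t = volume (Sset g b s t ∩ Lam g) :=
  (vol_inter_lam hg (sset_subset t)).symm

/-- G3: the set of leaves with strictly smaller `phi` value has measure at most `Phi t`. -/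
lemma vol_lt_le_Phi (hg : IsCRT g) (hb : IsEnum g b) {t : ℝ} (ht : t ∈ Lam g) :
    volume {u | u ∈ Lam g ∧ phi g b s u < phi g b s t} ≤ Phi g b s t := by
  apply measure_mono
  intro u hu
  obtain ⟨huΛ, hult⟩ := hu
  have hne : u ≠ t := fun h => by rw [h] at hult; exact lt_irrefl _ hult
  rcases tri_total hg hb huΛ ht hne with h | h
  · exact ⟨Ioo_subset_Icc_self (lam_sub_Ioo huΛ), h⟩
  · exact absurd (phi_le_phi hg hb h) (not_le.2 hult)

/-- G4: `Phi t` is at most the measure of leaves with `phi` value at most `phi t`. -/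
lemma Phi_le_vol_le (hg : IsCRT g) (hb : IsEnum g b) (t : ℝ) :
    Phi g b s t ≤ volume {u | u ∈ Lam g ∧ phi g b s u ≤ phi g b s t} := by
  rw [Phi_eq_lam hg]
  apply measure_mono
  intro u hu
  exact ⟨hu.2, phi_le_phi hg hb hu.1.2⟩

lemma mem_Icc01_of_Ioo (hg : IsCRT g) (hb : IsEnum g b) {i : ℕ} {u : ℝ}
    (hu : u ∈ Ioo (aI g b i) (cI g b i)) : u ∈ Icc (0:ℝ) 1 := by
  have h1 := (aPt_mem hg (bi_strict hb i)).1
  have h2 := (cPt_mem hg (bi_strict hb i)).2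
  exact ⟨le_of_lt (lt_trans h1 hu.1), le_of_lt (lt_trans hu.2 h2)⟩

/-- The sandwich: any point of the first block has `phi` value at most `bI' i`, any
point of the second block has `phi` value at least `bI' i`. -/
lemma sandwich (hg : IsCRT g) (hb : IsEnum g b) {i : ℕ} {t1 t2 : ℝ}
    (h1 : t1 ∈ Fst g b s i) (h2 : t2 ∈ Snd g b s i) :
    phi g b s t1 ≤ bI' g b s i ∧ bI' g b s i ≤ phi g b s t2 := by
  set a := aI g b i with ha
  set c := cI g b i with hc
  have hab : a < b i := aI_lt hg hb i
  have hbc : b i < c := lt_cI hg hb i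
  have hno : ∀ u ∈ Icc a c, ¬ Tri g b s u a := fun u hu => not_tri_inside_aI hg hb hu
  by_cases hsi : s i
  · -- s i = true : first block is (a, b i), second is (b i, c)
    have hF : Fst g b s i = Ioo a (b i) := by simp [Fst, hsi, ha]
    have hS : Snd g b s i = Ioo (b i) c := by simp [Snd, hsi, hc]
    have hbI : bI' g b s i = phi g b s a + (b i - a) := by
      simp [bI', aI', hsi, ha]
    rw [hF] at h1
    rw [hS] at h2
    have ht1ac : t1 ∈ Ioo a c := ⟨h1.1, lt_trans h1.2 hbc⟩
    have ht2ac : t2 ∈ Ioo a c := ⟨lt_trans hab h2.1, h2.2⟩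
    constructor
    · -- upper bound for the first block
      have hsub : Sset g b s t1 ⊆ (Sset g b s a ∪ Icc a (b i)) ∪ {c} := by
        intro u hu
        by_cases hin : u ∈ Icc a c
        · rcases le_or_gt u (b i) with hub | hub
          · exact Or.inl (Or.inr ⟨hin.1, hub⟩)
          · rcases lt_or_eq_of_le hin.2 with huc | huc
            · exfalso
              have : Tri g b s t1 u := (tri_iff hg hb).2 ⟨i, hF ▸ h1, hS ▸ ⟨hub, huc⟩⟩
              exact tri_asymm hg hb hu.2 this
            · exact Or.inr huc
        · exact Or.inl (Or.inl ⟨hu.1, (tri_outside hg hb hin ht1ac).1 hu.2⟩)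
      have hvol : Phi g b s t1 ≤ Phi g b s a + ENNReal.ofReal (b i - a) := by
        calc Phi g b s t1 ≤ volume ((Sset g b s a ∪ Icc a (b i)) ∪ {c}) :=
              measure_mono hsub
        _ ≤ volume (Sset g b s a ∪ Icc a (b i)) + volume ({c} : Set ℝ) :=
              measure_union_le _ _
        _ ≤ volume (Sset g b s a) + volume (Icc a (b i)) + volume ({c} : Set ℝ) :=
              add_le_add (measure_union_le _ _) le_rfl
        _ = Phi g b s a + ENNReal.ofReal (b i - a) := by
              rw [Real.volume_singleton, Real.volume_Icc, add_zero]; rfl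
      rw [hbI, phi_eq, phi_eq]
      have hfin : Phi g b s a + ENNReal.ofReal (b i - a) ≠ ⊤ :=
        ENNReal.add_ne_top.2 ⟨Phi_ne_top a, ENNReal.ofReal_ne_top⟩
      calc (Phi g b s t1).toReal ≤ (Phi g b s a + ENNReal.ofReal (b i - a)).toReal :=
            ENNReal.toReal_mono hfin hvol
      _ = (Phi g b s a).toReal + (b i - a) := by
            rw [ENNReal.toReal_add (Phi_ne_top a) ENNReal.ofReal_ne_top,
              ENNReal.toReal_ofReal (by linarith)]
    · -- lower bound for the second block
      have hIoosub : Ioo a (b i) ⊆ Sset g b s t2 ∩ Ioo a (b i) := by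
        intro u hu
        refine ⟨⟨mem_Icc01_of_Ioo hg hb ⟨hu.1, lt_trans hu.2 hbc⟩, ?_⟩, hu⟩
        exact (tri_iff hg hb).2 ⟨i, hF ▸ hu, hS ▸ h2⟩
      have hSsub : Sset g b s a ⊆ Sset g b s t2 \ Ioo a (b i) := by
        intro u hu
        have hout : u ∉ Icc a c := fun hin => hno u hin hu.2
        refine ⟨⟨hu.1, (tri_outside hg hb hout ht2ac).2 hu.2⟩, fun hmem => ?_⟩
        exact hout ⟨hmem.1.le, le_trans hmem.2.le hbc.le⟩
      have hvol : ENNReal.ofReal (b i - a) + Phi g b s a ≤ Phi g b s t2 := by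
        calc ENNReal.ofReal (b i - a) + Phi g b s a
            = volume (Ioo a (b i)) + volume (Sset g b s a) := by rw [Real.volume_Ioo]; rfl
        _ ≤ volume (Sset g b s t2 ∩ Ioo a (b i)) + volume (Sset g b s t2 \ Ioo a (b i)) :=
              add_le_add (measure_mono hIoosub) (measure_mono hSsub)
        _ = Phi g b s t2 := measure_inter_add_diff _ measurableSet_Ioo
      rw [hbI, phi_eq, phi_eq]
      calc (Phi g b s a).toReal + (b i - a)
          = (ENNReal.ofReal (b i - a) + Phi g b s a).toReal := by
            rw [ENNReal.toReal_add ENNReal.ofReal_ne_top (Phi_ne_top a),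
              ENNReal.toReal_ofReal (by linarith), add_comm]
      _ ≤ (Phi g b s t2).toReal := ENNReal.toReal_mono (Phi_ne_top t2) hvol
  · -- s i = false : first block is (b i, c), second is (a, b i)
    have hF : Fst g b s i = Ioo (b i) c := by simp [Fst, hsi, hc]
    have hS : Snd g b s i = Ioo a (b i) := by simp [Snd, hsi, ha]
    have hbI : bI' g b s i = phi g b s a + (c - b i) := by
      simp [bI', aI', hsi, ha, hc]
    rw [hF] at h1
    rw [hS] at h2
    have ht1ac : t1 ∈ Ioo a c := ⟨lt_trans hab h1.1, h1.2⟩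
    have ht2ac : t2 ∈ Ioo a c := ⟨h2.1, lt_trans h2.2 hbc⟩
    constructor
    · have hsub : Sset g b s t1 ⊆ (Sset g b s a ∪ Icc (b i) c) ∪ {a} := by
        intro u hu
        by_cases hin : u ∈ Icc a c
        · rcases le_or_gt (b i) u with hub | hub
          · exact Or.inl (Or.inr ⟨hub, hin.2⟩)
          · rcases lt_or_eq_of_le hin.1 with hua | hua
            · exfalso
              have : Tri g b s t1 u := (tri_iff hg hb).2 ⟨i, hF ▸ h1, hS ▸ ⟨hua, hub⟩⟩
              exact tri_asymm hg hb hu.2 this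
            · exact Or.inr hua.symm
        · exact Or.inl (Or.inl ⟨hu.1, (tri_outside hg hb hin ht1ac).1 hu.2⟩)
      have hvol : Phi g b s t1 ≤ Phi g b s a + ENNReal.ofReal (c - b i) := by
        calc Phi g b s t1 ≤ volume ((Sset g b s a ∪ Icc (b i) c) ∪ {a}) :=
              measure_mono hsub
        _ ≤ volume (Sset g b s a ∪ Icc (b i) c) + volume ({a} : Set ℝ) :=
              measure_union_le _ _
        _ ≤ volume (Sset g b s a) + volume (Icc (b i) c) + volume ({a} : Set ℝ) :=
              add_le_add (measure_union_le _ _) le_rfl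
        _ = Phi g b s a + ENNReal.ofReal (c - b i) := by
              rw [Real.volume_singleton, Real.volume_Icc, add_zero]; rfl
      rw [hbI, phi_eq, phi_eq]
      have hfin : Phi g b s a + ENNReal.ofReal (c - b i) ≠ ⊤ :=
        ENNReal.add_ne_top.2 ⟨Phi_ne_top a, ENNReal.ofReal_ne_top⟩
      calc (Phi g b s t1).toReal ≤ (Phi g b s a + ENNReal.ofReal (c - b i)).toReal :=
            ENNReal.toReal_mono hfin hvol
      _ = (Phi g b s a).toReal + (c - b i) := by
            rw [ENNReal.toReal_add (Phi_ne_top a) ENNReal.ofReal_ne_top,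
              ENNReal.toReal_ofReal (by linarith)]
    · have hIoosub : Ioo (b i) c ⊆ Sset g b s t2 ∩ Ioo (b i) c := by
        intro u hu
        refine ⟨⟨mem_Icc01_of_Ioo hg hb ⟨lt_trans hab hu.1, hu.2⟩, ?_⟩, hu⟩
        exact (tri_iff hg hb).2 ⟨i, hF ▸ hu, hS ▸ h2⟩
      have hSsub : Sset g b s a ⊆ Sset g b s t2 \ Ioo (b i) c := by
        intro u hu
        have hout : u ∉ Icc a c := fun hin => hno u hin hu.2
        refine ⟨⟨hu.1, (tri_outside hg hb hout ht2ac).2 hu.2⟩, fun hmem => ?_⟩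
        exact hout ⟨le_trans hab.le hmem.1.le, hmem.2.le⟩
      have hvol : ENNReal.ofReal (c - b i) + Phi g b s a ≤ Phi g b s t2 := by
        calc ENNReal.ofReal (c - b i) + Phi g b s a
            = volume (Ioo (b i) c) + volume (Sset g b s a) := by rw [Real.volume_Ioo]; rfl
        _ ≤ volume (Sset g b s t2 ∩ Ioo (b i) c) + volume (Sset g b s t2 \ Ioo (b i) c) :=
              add_le_add (measure_mono hIoosub) (measure_mono hSsub)
        _ = Phi g b s t2 := measure_inter_add_diff _ measurableSet_Ioo
      rw [hbI, phi_eq, phi_eq]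
      calc (Phi g b s a).toReal + (c - b i)
          = (ENNReal.ofReal (c - b i) + Phi g b s a).toReal := by
            rw [ENNReal.toReal_add ENNReal.ofReal_ne_top (Phi_ne_top a),
              ENNReal.toReal_ofReal (by linarith), add_comm]
      _ ≤ (Phi g b s t2).toReal := ENNReal.toReal_mono (Phi_ne_top t2) hvol

lemma lenF_pos (hg : IsCRT g) (hb : IsEnum g b) (j : ℕ) :
    0 < (if s j then b j - aI g b j else cI g b j - b j) := by
  by_cases hsj : s j <;> simp [hsj] <;>
    [exact aI_lt hg hb j; exact lt_cI hg hb j]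

lemma lenF_lt (hg : IsCRT g) (hb : IsEnum g b) (j : ℕ) :
    (if s j then b j - aI g b j else cI g b j - b j) < cI g b j - aI g b j := by
  have h1 := aI_lt hg hb j
  have h2 := lt_cI hg hb j
  by_cases hsj : s j <;> simp [hsj] <;> linarith

lemma vol_fstSet (hg : IsCRT g) (hb : IsEnum g b) (j : ℕ) :
    volume (Fst g b s j) =
      ENNReal.ofReal (if s j then b j - aI g b j else cI g b j - b j) := by
  by_cases hsj : s j <;> simp [Fst, hsj, Real.volume_Ioo]

lemma diff_snd_vol (hg : IsCRT g) (hb : IsEnum g b) (j : ℕ) :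
    volume (Ioo (aI g b j) (cI g b j) \ Snd g b s j) ≤
      ENNReal.ofReal (if s j then b j - aI g b j else cI g b j - b j) := by
  by_cases hsj : s j
  · have hsub : Ioo (aI g b j) (cI g b j) \ Snd g b s j ⊆ Ioc (aI g b j) (b j) := by
      intro u hu
      have hS : Snd g b s j = Ioo (b j) (cI g b j) := by simp [Snd, hsj]
      rw [hS] at hu
      rcases le_or_gt u (b j) with h | h
      · exact ⟨hu.1.1, h⟩
      · exact absurd ⟨h, hu.1.2⟩ hu.2
    refine le_trans (measure_mono hsub) ?_
    rw [Real.volume_Ioc]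
    simp [hsj]
  · have hsub : Ioo (aI g b j) (cI g b j) \ Snd g b s j ⊆ Ico (b j) (cI g b j) := by
      intro u hu
      have hS : Snd g b s j = Ioo (aI g b j) (b j) := by simp [Snd, hsj]
      rw [hS] at hu
      rcases lt_or_ge u (b j) with h | h
      · exact absurd ⟨hu.1.1, h⟩ hu.2
      · exact ⟨h, hu.1.2⟩
    refine le_trans (measure_mono hsub) ?_
    rw [Real.volume_Ico]
    simp [hsj]

/-- Lemma K: if `p'` lies in the first block of `j`, `w` is a leaf outside the interval
of `j` which does not come before `p'`, then `phi w` exceeds `phi p'` by at least the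
length of the second block. -/
lemma phiK (hg : IsCRT g) (hb : IsEnum g b) {j : ℕ} {p' w : ℝ}
    (hp' : p' ∈ Fst g b s j) (hp'Λ : p' ∈ Lam g) (hwΛ : w ∈ Lam g)
    (hw : w ∉ Icc (aI g b j) (cI g b j)) (hnp : ¬ Tri g b s w p') :
    (cI g b j - aI g b j) + phi g b s p'
      ≤ phi g b s w + (if s j then b j - aI g b j else cI g b j - b j) := by
  set a := aI g b j with hadef
  set c := cI g b j with hcdef
  set L := (if s j then b j - a else c - b j) with hLdef
  have hp'I : p' ∈ Ioo a c := fst_subset hg hb j hp'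
  have hIccsub : Ioo a c ⊆ Icc (0:ℝ) 1 := fun u hu => mem_Icc01_of_Ioo hg hb hu
  have hpw : p' ≠ w := fun h => hw (h ▸ Ioo_subset_Icc_self hp'I)
  have hTw : Tri g b s p' w :=
    (tri_total hg hb hp'Λ hwΛ hpw).resolve_right hnp
  have hk1 : Lam g ∩ Ioo a c ⊆ Sset g b s w ∩ Ioo a c := by
    rintro u ⟨huΛ, huI⟩
    have hnwu : ¬ Tri g b s w u := fun h =>
      hnp ((tri_outside hg hb hw hp'I).2 ((tri_outside hg hb hw huI).1 h))
    have hneq : u ≠ w := fun h => hw (h ▸ Ioo_subset_Icc_self huI)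
    have : Tri g b s u w := (tri_total hg hb huΛ hwΛ hneq).resolve_right hnwu
    exact ⟨⟨hIccsub huI, this⟩, huI⟩
  have hk2 : (Sset g b s p' ∩ Lam g) \ Ioo a c ⊆ Sset g b s w \ Ioo a c := by
    rintro u ⟨⟨huS, huΛ⟩, huI⟩
    exact ⟨⟨huS.1, tri_trans hg hb huS.2 hTw⟩, huI⟩
  have hk3 : (Sset g b s p' ∩ Lam g) ∩ Ioo a c ⊆ Ioo a c \ Snd g b s j := by
    rintro u ⟨⟨huS, huΛ⟩, huI⟩
    refine ⟨huI, fun huSnd => ?_⟩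
    exact tri_asymm hg hb huS.2 ((tri_iff hg hb).2 ⟨j, hp', huSnd⟩)
  set X := volume ((Sset g b s p' ∩ Lam g) \ Ioo a c) with hX
  have e1 : ENNReal.ofReal (c - a) ≤ volume (Sset g b s w ∩ Ioo a c) := by
    calc ENNReal.ofReal (c - a) = volume (Ioo a c) := (Real.volume_Ioo).symm
    _ = volume (Ioo a c ∩ Lam g) := (vol_inter_lam hg hIccsub).symm
    _ ≤ volume (Sset g b s w ∩ Ioo a c) := by
          apply measure_mono
          intro u hu
          exact hk1 ⟨hu.2, hu.1⟩
  have e2 : Phi g b s p' ≤ ENNReal.ofReal L + X := by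
    rw [Phi_eq_lam hg p']
    calc volume (Sset g b s p' ∩ Lam g)
        = volume ((Sset g b s p' ∩ Lam g) ∩ Ioo a c) + X :=
          (measure_inter_add_diff _ measurableSet_Ioo).symm
    _ ≤ volume (Ioo a c \ Snd g b s j) + X := add_le_add (measure_mono hk3) le_rfl
    _ ≤ ENNReal.ofReal L + X := add_le_add (diff_snd_vol hg hb j) le_rfl
  have e3 : ENNReal.ofReal (c - a) + X ≤ Phi g b s w := by
    calc ENNReal.ofReal (c - a) + X
        ≤ volume (Sset g b s w ∩ Ioo a c) + volume (Sset g b s w \ Ioo a c) :=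
          add_le_add e1 (measure_mono hk2)
    _ = Phi g b s w := measure_inter_add_diff _ measurableSet_Ioo
  have final : ENNReal.ofReal (c - a) + Phi g b s p'
      ≤ Phi g b s w + ENNReal.ofReal L := by
    calc ENNReal.ofReal (c - a) + Phi g b s p'
        ≤ ENNReal.ofReal (c - a) + (ENNReal.ofReal L + X) := add_le_add le_rfl e2
    _ = (ENNReal.ofReal (c - a) + X) + ENNReal.ofReal L := by ring
    _ ≤ Phi g b s w + ENNReal.ofReal L := add_le_add e3 le_rfl
  have hfin : Phi g b s w + ENNReal.ofReal L ≠ ⊤ :=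
    ENNReal.add_ne_top.2 ⟨Phi_ne_top w, ENNReal.ofReal_ne_top⟩
  have h := ENNReal.toReal_mono hfin final
  rw [ENNReal.toReal_add ENNReal.ofReal_ne_top (Phi_ne_top p'),
    ENNReal.toReal_add (Phi_ne_top w) ENNReal.ofReal_ne_top,
    ENNReal.toReal_ofReal (by linarith [aI_lt hg hb j, lt_cI hg hb j] : (0:ℝ) ≤ c - a),
    ENNReal.toReal_ofReal (lenF_pos hg hb j).le] at h
  exact h

/-- Lemma K': if `q'` lies in the second block of `j` and the leaf `w` outside the
interval of `j` comes before `q'`, then `phi q'` exceeds `phi w` by at least the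
length of the first block. -/
lemma phiK' (hg : IsCRT g) (hb : IsEnum g b) {j : ℕ} {q' w : ℝ}
    (hq' : q' ∈ Snd g b s j) (hwΛ : w ∈ Lam g)
    (hw : w ∉ Icc (aI g b j) (cI g b j)) (hwq : Tri g b s w q') :
    phi g b s w + (if s j then b j - aI g b j else cI g b j - b j)
      ≤ phi g b s q' := by
  set a := aI g b j with hadef
  set c := cI g b j with hcdef
  set L := (if s j then b j - a else c - b j) with hLdef
  have hq'I : q' ∈ Ioo a c := snd_subset hg hb j hq'
  have hIccsub : Ioo a c ⊆ Icc (0:ℝ) 1 := fun u hu => mem_Icc01_of_Ioo hg hb hu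
  have hk1 : Fst g b s j ⊆ Sset g b s q' ∩ Ioo a c := by
    intro u hu
    refine ⟨⟨hIccsub (fst_subset hg hb j hu), ?_⟩, fst_subset hg hb j hu⟩
    exact (tri_iff hg hb).2 ⟨j, hu, hq'⟩
  have hk2 : (Sset g b s w ∩ Lam g) \ Ioo a c ⊆ Sset g b s q' \ Ioo a c := by
    rintro u ⟨⟨huS, huΛ⟩, huI⟩
    exact ⟨⟨huS.1, tri_trans hg hb huS.2 hwq⟩, huI⟩
  have hk3 : (Sset g b s w ∩ Lam g) ∩ Ioo a c = ∅ := by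
    rw [eq_empty_iff_forall_notMem]
    rintro u ⟨⟨huS, huΛ⟩, huI⟩
    have : Tri g b s w u := (tri_outside hg hb hw huI).2 ((tri_outside hg hb hw hq'I).1 hwq)
    exact tri_asymm hg hb huS.2 this
  have e2 : Phi g b s w = volume ((Sset g b s w ∩ Lam g) \ Ioo a c) := by
    rw [Phi_eq_lam hg w]
    calc volume (Sset g b s w ∩ Lam g)
        = volume ((Sset g b s w ∩ Lam g) ∩ Ioo a c) +
            volume ((Sset g b s w ∩ Lam g) \ Ioo a c) :=
          (measure_inter_add_diff _ measurableSet_Ioo).symm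
    _ = volume ((Sset g b s w ∩ Lam g) \ Ioo a c) := by rw [hk3]; simp
  have final : ENNReal.ofReal L + Phi g b s w ≤ Phi g b s q' := by
    calc ENNReal.ofReal L + Phi g b s w
        ≤ volume (Fst g b s j) + volume ((Sset g b s w ∩ Lam g) \ Ioo a c) := by
          refine add_le_add ?_ e2.le
          rw [vol_fstSet hg hb j]
    _ ≤ volume (Sset g b s q' ∩ Ioo a c) + volume (Sset g b s q' \ Ioo a c) :=
          add_le_add (measure_mono hk1) (measure_mono hk2)
    _ = Phi g b s q' := measure_inter_add_diff _ measurableSet_Ioo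
  have h := ENNReal.toReal_mono (Phi_ne_top q') final
  rw [ENNReal.toReal_add ENNReal.ofReal_ne_top (Phi_ne_top w),
    ENNReal.toReal_ofReal (lenF_pos hg hb j).le] at h
  rw [phi_eq, phi_eq]
  linarith

lemma interval_nonempty_ne (hg : IsCRT g) (hb : IsEnum g b) (i : ℕ) :
    Ioo (aI g b i) (b i) ≠ Ioo (b i) (cI g b i) := by
  intro h
  have hab := aI_lt hg hb i
  have hm : (aI g b i + b i)/2 ∈ Ioo (aI g b i) (b i) := ⟨by linarith, by linarith⟩
  rw [h] at hm
  linarith [hm.1, hm.2]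

lemma snd_compl_left (hg : IsCRT g) (hb : IsEnum g b) {i : ℕ}
    (h : Fst g b s i = Ioo (aI g b i) (b i)) : Snd g b s i = Ioo (b i) (cI g b i) := by
  rcases fst_snd_cases g b s i with ⟨hf, hs⟩ | ⟨hf, hs⟩
  · exact hs
  · exact absurd (hf.symm.trans h).symm (interval_nonempty_ne hg hb i)

lemma snd_compl_right (hg : IsCRT g) (hb : IsEnum g b) {i : ℕ}
    (h : Fst g b s i = Ioo (b i) (cI g b i)) : Snd g b s i = Ioo (aI g b i) (b i) := by
  rcases fst_snd_cases g b s i with ⟨hf, hs⟩ | ⟨hf, hs⟩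
  · exact absurd (hf.symm.trans h) (interval_nonempty_ne hg hb i)
  · exact hs

lemma fst_compl_left (hg : IsCRT g) (hb : IsEnum g b) {i : ℕ}
    (h : Snd g b s i = Ioo (aI g b i) (b i)) : Fst g b s i = Ioo (b i) (cI g b i) := by
  rcases fst_snd_cases g b s i with ⟨hf, hs⟩ | ⟨hf, hs⟩
  · exact absurd (hs.symm.trans h).symm (interval_nonempty_ne hg hb i)
  · exact hf

lemma fst_compl_right (hg : IsCRT g) (hb : IsEnum g b) {i : ℕ}
    (h : Snd g b s i = Ioo (b i) (cI g b i)) : Fst g b s i = Ioo (aI g b i) (b i) := by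
  rcases fst_snd_cases g b s i with ⟨hf, hs⟩ | ⟨hf, hs⟩
  · exact hf
  · exact absurd (hs.symm.trans h) (interval_nonempty_ne hg hb i)

/-- A leaf in the closed excursion interval lies in one of the two open blocks. -/
lemma mem_blocks (hg : IsCRT g) (hb : IsEnum g b) {i : ℕ} {r : ℝ}
    (hr : r ∈ Lam g) (hIcc : r ∈ Icc (aI g b i) (cI g b i)) :
    r ∈ Fst g b s i ∪ Snd g b s i := by
  have hβ := bi_strict hb i
  rcases eq_or_lt_of_le hIcc.1 with h | h
  · exact absurd hr (by rw [← h]; exact aPt_not_leaf hg hβ)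
  rcases eq_or_lt_of_le hIcc.2 with h' | h'
  · exact absurd hr (by rw [h']; exact cPt_not_leaf hg hβ)
  rcases lt_trichotomy r (b i) with hrb | hrb | hrb
  · have : r ∈ Ioo (aI g b i) (b i) := ⟨h, hrb⟩
    rcases fst_snd_cases g b s i with ⟨hf, -⟩ | ⟨-, hs⟩
    · exact Or.inl (hf ▸ this)
    · exact Or.inr (hs ▸ this)
  · exact absurd hr (hrb ▸ strict_not_leaf hβ)
  · have : r ∈ Ioo (b i) (cI g b i) := ⟨hrb, h'⟩
    rcases fst_snd_cases g b s i with ⟨-, hs⟩ | ⟨hf, -⟩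
    · exact Or.inr (hs ▸ this)
    · exact Or.inl (hf ▸ this)

lemma atomSide (hg : IsCRT g) (hb : IsEnum g b) {j : ℕ} {p0 w : ℝ}
    (hp0F : p0 ∈ Fst g b s j) (hp0Λ : p0 ∈ Lam g) (hwΛ : w ∈ Lam g)
    (hwI : w ∉ Icc (aI g b j) (cI g b j)) (hnwp : ¬ Tri g b s w p0)
    (heq : phi g b s p0 = phi g b s w) : False := by
  have h := phiK hg hb hp0F hp0Λ hwΛ hwI hnwp
  rw [heq] at h
  linarith [lenF_lt hg hb (s := s) j]

lemma atomSide' (hg : IsCRT g) (hb : IsEnum g b) {j : ℕ} {q0 w : ℝ}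
    (hq0S : q0 ∈ Snd g b s j) (hwΛ : w ∈ Lam g)
    (hwI : w ∉ Icc (aI g b j) (cI g b j)) (hTw : Tri g b s w q0)
    (heq : phi g b s w = phi g b s q0) : False := by
  have h := phiK' hg hb hq0S hwΛ hwI hTw
  rw [heq] at h
  linarith [lenF_pos hg hb (s := s) j]

lemma inner_fst (hg : IsCRT g) (hb : IsEnum g b) {i j : ℕ} {p0 q0 w : ℝ}
    (hp0i : p0 ∈ Fst g b s i) (hq0i : q0 ∈ Fst g b s i)
    (hp0F : p0 ∈ Fst g b s j) (hq0S : q0 ∈ Snd g b s j)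
    (hwS : w ∈ Snd g b s i) (hp0Λ : p0 ∈ Lam g) (hwΛ : w ∈ Lam g)
    (hnwp : ¬ Tri g b s w p0) (heq : phi g b s p0 = phi g b s w) : False := by
  have hij : i ≠ j := by
    rintro rfl
    exact fst_snd_disj hq0i hq0S
  rcases lt_trichotomy (g (b j)) (g (b i)) with hgl | hgl | hgl
  · rcases nestSide hg hb hgl (fst_subset hg hb i hp0i) (fst_subset hg hb j hp0F)
      with hs | hs
    · have h1 : q0 ∈ Fst g b s j := by
        rw [fst_eq_of_left hp0F (hs (Ioo_subset_Icc_self (fst_subset hg hb i hp0i))).2]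
        exact hs (Ioo_subset_Icc_self (fst_subset hg hb i hq0i))
      exact fst_snd_disj h1 hq0S
    · have h1 : q0 ∈ Fst g b s j := by
        rw [fst_eq_of_right hp0F (hs (Ioo_subset_Icc_self (fst_subset hg hb i hp0i))).1]
        exact hs (Ioo_subset_Icc_self (fst_subset hg hb i hq0i))
      exact fst_snd_disj h1 hq0S
  · exact (gb_ne hg hb hij) hgl.symm
  · rcases nestSide hg hb hgl (fst_subset hg hb j hp0F) (fst_subset hg hb i hp0i)
      with hs | hs
    · have hp0m : p0 ∈ Ioo (aI g b i) (b i) :=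
        hs (Ioo_subset_Icc_self (fst_subset hg hb j hp0F))
      have hSi := snd_compl_left hg hb (fst_eq_of_left hp0i hp0m.2)
      have hwm : w ∈ Ioo (b i) (cI g b i) := by rw [← hSi]; exact hwS
      have hwI : w ∉ Icc (aI g b j) (cI g b j) := fun hmem =>
        absurd (hs hmem).2 (not_lt.2 hwm.1.le)
      exact atomSide hg hb hp0F hp0Λ hwΛ hwI hnwp heq
    · have hp0m : p0 ∈ Ioo (b i) (cI g b i) :=
        hs (Ioo_subset_Icc_self (fst_subset hg hb j hp0F))
      have hSi := snd_compl_right hg hb (fst_eq_of_right hp0i hp0m.1)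
      have hwm : w ∈ Ioo (aI g b i) (b i) := by rw [← hSi]; exact hwS
      have hwI : w ∉ Icc (aI g b j) (cI g b j) := fun hmem =>
        absurd (hs hmem).1 (not_lt.2 hwm.2.le)
      exact atomSide hg hb hp0F hp0Λ hwΛ hwI hnwp heq

lemma inner_snd (hg : IsCRT g) (hb : IsEnum g b) {i j : ℕ} {p0 q0 w : ℝ}
    (hp0i : p0 ∈ Snd g b s i) (hq0i : q0 ∈ Snd g b s i)
    (hp0F : p0 ∈ Fst g b s j) (hq0S : q0 ∈ Snd g b s j)
    (hwF : w ∈ Fst g b s i) (hwΛ : w ∈ Lam g)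
    (hTw : Tri g b s w q0) (heq : phi g b s w = phi g b s q0) : False := by
  have hij : i ≠ j := by
    rintro rfl
    exact fst_snd_disj hp0F hp0i
  rcases lt_trichotomy (g (b j)) (g (b i)) with hgl | hgl | hgl
  · rcases nestSide hg hb hgl (snd_subset hg hb i hp0i) (fst_subset hg hb j hp0F)
      with hs | hs
    · have h1 : q0 ∈ Fst g b s j := by
        rw [fst_eq_of_left hp0F (hs (Ioo_subset_Icc_self (snd_subset hg hb i hp0i))).2]
        exact hs (Ioo_subset_Icc_self (snd_subset hg hb i hq0i))
      exact fst_snd_disj h1 hq0S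
    · have h1 : q0 ∈ Fst g b s j := by
        rw [fst_eq_of_right hp0F (hs (Ioo_subset_Icc_self (snd_subset hg hb i hp0i))).1]
        exact hs (Ioo_subset_Icc_self (snd_subset hg hb i hq0i))
      exact fst_snd_disj h1 hq0S
  · exact (gb_ne hg hb hij) hgl.symm
  · rcases nestSide hg hb hgl (snd_subset hg hb j hq0S) (snd_subset hg hb i hq0i)
      with hs | hs
    · have hq0m : q0 ∈ Ioo (aI g b i) (b i) :=
        hs (Ioo_subset_Icc_self (snd_subset hg hb j hq0S))
      have hFi := fst_compl_left hg hb (snd_eq_of_left hq0i hq0m.2)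
      have hwm : w ∈ Ioo (b i) (cI g b i) := by rw [← hFi]; exact hwF
      have hwI : w ∉ Icc (aI g b j) (cI g b j) := fun hmem =>
        absurd (hs hmem).2 (not_lt.2 hwm.1.le)
      exact atomSide' hg hb hq0S hwΛ hwI hTw heq
    · have hq0m : q0 ∈ Ioo (b i) (cI g b i) :=
        hs (Ioo_subset_Icc_self (snd_subset hg hb j hq0S))
      have hFi := fst_compl_right hg hb (snd_eq_of_right hq0i hq0m.1)
      have hwm : w ∈ Ioo (aI g b i) (b i) := by rw [← hFi]; exact hwF
      have hwI : w ∉ Icc (aI g b j) (cI g b j) := fun hmem =>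
        absurd (hs hmem).1 (not_lt.2 hwm.2.le)
      exact atomSide' hg hb hq0S hwΛ hwI hTw heq

/-- No three distinct leaves can share the same `phi` value. -/
lemma atom3 (hg : IsCRT g) (hb : IsEnum g b) {p q r : ℝ}
    (hpΛ : p ∈ Lam g) (hqΛ : q ∈ Lam g) (hrΛ : r ∈ Lam g)
    (hpq : Tri g b s p q) (hrp : r ≠ p) (hrq : r ≠ q)
    (h1 : phi g b s p = phi g b s q) (h2 : phi g b s r = phi g b s p) : False := by
  obtain ⟨i, hpF, hqS⟩ := (tri_iff hg hb).1 hpq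
  by_cases hrI : r ∈ Icc (aI g b i) (cI g b i)
  · rcases mem_blocks hg hb hrΛ hrI with hrF | hrS
    · rcases tri_total hg hb hpΛ hrΛ (Ne.symm hrp) with hT0 | hT0
      · obtain ⟨j, hp0F, hq0S⟩ := (tri_iff hg hb).1 hT0
        exact inner_fst hg hb hpF hrF hp0F hq0S hqS hpΛ hqΛ
          (fun h => tri_asymm hg hb h hpq) h1
      · obtain ⟨j, hp0F, hq0S⟩ := (tri_iff hg hb).1 hT0
        exact inner_fst hg hb hrF hpF hp0F hq0S hqS hrΛ hqΛ
          (fun h => tri_asymm hg hb (tri_trans hg hb h hT0) hpq) (h2.trans h1)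
    · rcases tri_total hg hb hqΛ hrΛ (Ne.symm hrq) with hT0 | hT0
      · obtain ⟨j, hp0F, hq0S⟩ := (tri_iff hg hb).1 hT0
        exact inner_snd hg hb hqS hrS hp0F hq0S hpF hpΛ
          (tri_trans hg hb hpq hT0) h2.symm
      · obtain ⟨j, hp0F, hq0S⟩ := (tri_iff hg hb).1 hT0
        exact inner_snd hg hb hrS hqS hp0F hq0S hpF hpΛ hpq h1
  · rcases tri_total hg hb hrΛ hpΛ hrp with hTrp | hTpr
    · have hTrq : Tri g b s r q :=
        (tri_outside hg hb hrI (snd_subset hg hb i hqS)).2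
          ((tri_outside hg hb hrI (fst_subset hg hb i hpF)).1 hTrp)
      exact atomSide' hg hb hqS hrΛ hrI hTrq (h2.trans h1)
    · have hnp : ¬ Tri g b s r p := fun h => tri_asymm hg hb h hTpr
      exact atomSide hg hb hpF hpΛ hrΛ hrI hnp h2.symm

/-- Positive-measure sets of leaves with constant `phi` value are impossible. -/
lemma atom_of_vol (hg : IsCRT g) (hb : IsEnum g b) {P : Set ℝ} {γ : ℝ}
    (hPΛ : P ⊆ Lam g) (hφ : ∀ u ∈ P, phi g b s u = γ) (hvol : volume P ≠ 0) :
    False := by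
  have hinf : P.Infinite := fun hfin => hvol (hfin.measure_zero _)
  obtain ⟨p, hp⟩ := hinf.nonempty
  obtain ⟨q, hq⟩ := (hinf.diff (Set.finite_singleton p)).nonempty
  obtain ⟨r, hr⟩ := (hinf.diff ((Set.finite_singleton p).insert q)).nonempty
  have hqP : q ∈ P := hq.1
  have hrP : r ∈ P := hr.1
  have hqp : q ≠ p := by simpa using hq.2
  have hrq : r ≠ q := by
    have := hr.2
    simp only [mem_insert_iff, mem_singleton_iff, not_or] at this
    exact this.1
  have hrp : r ≠ p := by
    have := hr.2
    simp only [mem_insert_iff, mem_singleton_iff, not_or] at this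
    exact this.2
  have e1 : phi g b s p = phi g b s q := by rw [hφ p hp, hφ q hqP]
  have e2 : phi g b s q = phi g b s p := e1.symm
  have e3 : phi g b s r = phi g b s p := by rw [hφ r hrP, hφ p hp]
  have e4 : phi g b s r = phi g b s q := by rw [hφ r hrP, hφ q hqP]
  rcases tri_total hg hb (hPΛ hp) (hPΛ hqP) (Ne.symm hqp) with hT | hT
  · exact atom3 hg hb (hPΛ hp) (hPΛ hqP) (hPΛ hrP) hT hrp hrq e1 e3
  · exact atom3 hg hb (hPΛ hqP) (hPΛ hp) (hPΛ hrP) hT hrq hrp e2 e4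

/-- There is no interval `(α,β) ⊆ [0,1]` free of `phi` values of leaves. -/
lemma no_gap (hg : IsCRT g) (hb : IsEnum g b) {α β : ℝ}
    (hαβ : α < β) (hα0 : 0 ≤ α) (hβ1 : β ≤ 1)
    (hgap : ∀ t ∈ Lam g, phi g b s t ∉ Ioo α β) : False := by
  classical
  set A := {t | t ∈ Lam g ∧ phi g b s t ≤ α} with hAdef
  set B := {t | t ∈ Lam g ∧ β ≤ phi g b s t} with hBdef
  have hmφ := measurable_phi (s := s) hg hb
  have hmA : MeasurableSet A := (measurable_lam hg).inter (hmφ measurableSet_Iic)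
  have hmB : MeasurableSet B := (measurable_lam hg).inter (hmφ measurableSet_Ici)
  have hAB : Lam g ⊆ A ∪ B := by
    intro t ht
    rcases le_or_gt (phi g b s t) α with h | h
    · exact Or.inl ⟨ht, h⟩
    · rcases lt_or_ge (phi g b s t) β with h' | h'
      · exact absurd ⟨h, h'⟩ (hgap t ht)
      · exact Or.inr ⟨ht, h'⟩
  have hsum : (1:ENNReal) ≤ volume A + volume B := by
    calc (1:ENNReal) = volume (Lam g) := (vol_lam hg).symm
    _ ≤ volume (A ∪ B) := measure_mono hAB
    _ ≤ volume A + volume B := measure_union_le _ _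
  have hAsub : A ⊆ Lam g := fun t ht => ht.1
  have hBsub : B ⊆ Lam g := fun t ht => ht.1
  by_cases hA : volume A < ENNReal.ofReal β
  · -- atom at the bottom of B
    have hBne : B.Nonempty := by
      apply nonempty_of_measure_ne_zero (μ := (volume : Measure ℝ))
      intro h0
      rw [h0, add_zero] at hsum
      have : (1:ENNReal) < ENNReal.ofReal β := lt_of_le_of_lt hsum hA
      exact absurd this (not_lt.2 (ENNReal.ofReal_le_one.2 hβ1))
    have hine : (phi g b s '' B).Nonempty := hBne.image _
    have hbdd : BddBelow (phi g b s '' B) := by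
      refine ⟨0, ?_⟩
      rintro _ ⟨t, -, rfl⟩
      exact phi_nonneg t
    set κ := sInf (phi g b s '' B) with hκdef
    have hκβ : β ≤ κ := by
      apply le_csInf hine
      rintro _ ⟨t, htB, rfl⟩
      exact htB.2
    set Pn := fun n : ℕ => {u | u ∈ B ∧ phi g b s u < κ + 1/(n+1)} with hPndef
    have hmPn : ∀ n, MeasurableSet (Pn n) := fun n =>
      hmB.inter (hmφ measurableSet_Iio)
    have key : ∀ n : ℕ, ENNReal.ofReal β ≤ volume A + volume (Pn n) := by
      intro n
      have hpos : (0:ℝ) < 1/((n:ℝ)+1) := by positivity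
      obtain ⟨x0, hx0mem, hx0lt⟩ := exists_lt_of_csInf_lt hine
        (show κ < κ + 1/((n:ℝ)+1) by linarith)
      obtain ⟨t, htB, rfl⟩ := hx0mem
      have hsub : {u | u ∈ Lam g ∧ phi g b s u ≤ phi g b s t} ⊆ A ∪ Pn n := by
        rintro u ⟨huΛ, hu⟩
        rcases hAB huΛ with h | h
        · exact Or.inl h
        · exact Or.inr ⟨h, lt_of_le_of_lt hu hx0lt⟩
      calc ENNReal.ofReal β ≤ ENNReal.ofReal (phi g b s t) :=
            ENNReal.ofReal_le_ofReal (le_trans hκβ (csInf_le hbdd ⟨t, htB, rfl⟩) |>.trans le_rfl)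
      _ = Phi g b s t := by rw [phi_eq]; exact ENNReal.ofReal_toReal (Phi_ne_top t)
      _ ≤ volume {u | u ∈ Lam g ∧ phi g b s u ≤ phi g b s t} := Phi_le_vol_le hg hb t
      _ ≤ volume (A ∪ Pn n) := measure_mono hsub
      _ ≤ volume A + volume (Pn n) := measure_union_le _ _
    set P := {u | u ∈ B ∧ phi g b s u ≤ κ} with hPdef
    have hPeq : P = ⋂ n, Pn n := by
      ext u
      simp only [hPdef, hPndef, mem_setOf_eq, mem_iInter]
      constructor
      · rintro ⟨huB, hle⟩ n
        have : (0:ℝ) < 1/((n:ℝ)+1) := by positivity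
        exact ⟨huB, by linarith⟩
      · intro h
        refine ⟨(h 0).1, ?_⟩
        by_contra hc
        push_neg at hc
        obtain ⟨n, hn⟩ := exists_nat_one_div_lt (show (0:ℝ) < phi g b s u - κ by linarith)
        have := (h n).2
        linarith
    have hanti : Antitone Pn := by
      intro m n hmn u hu
      refine ⟨hu.1, lt_of_lt_of_le hu.2 ?_⟩
      have h1 : (m:ℝ) + 1 ≤ (n:ℝ) + 1 := by exact_mod_cast Nat.succ_le_succ hmn
      have := one_div_le_one_div_of_le (by positivity : (0:ℝ) < (m:ℝ)+1) h1
      linarith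
    have hvolP : volume P = ⨅ n, volume (Pn n) := by
      rw [hPeq]
      exact Antitone.measure_iInter hanti (fun n => (hmPn n).nullMeasurableSet)
        ⟨0, ne_top_of_le_ne_top ENNReal.one_ne_top
          (le_trans (measure_mono (fun u hu => Ioo_subset_Icc_self (lam_sub_Ioo hu.1.1)))
            (by rw [Real.volume_Icc]; norm_num))⟩
    have hlb : ENNReal.ofReal β - volume A ≤ volume P := by
      rw [hvolP]
      exact le_iInf fun n => tsub_le_iff_left.2 (key n)
    have hP0 : volume P ≠ 0 := by
      intro h0
      rw [h0] at hlb
      have := tsub_pos_iff_lt.2 hA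
      exact absurd hlb (not_le.2 this)
    refine atom_of_vol (s := s) hg hb (γ := κ) (fun u hu => hu.1.1) ?_ hP0
    intro u hu
    exact le_antisymm hu.2 (csInf_le hbdd ⟨u, hu.1, rfl⟩)
  · -- atom at the top of A
    push_neg at hA
    have hβpos : (0:ℝ) < β := lt_of_le_of_lt hα0 hαβ
    have hAne : A.Nonempty := by
      apply nonempty_of_measure_ne_zero (μ := (volume : Measure ℝ))
      intro h0
      rw [h0] at hA
      exact absurd hA (not_le.2 (ENNReal.ofReal_pos.2 hβpos))
    have hine : (phi g b s '' A).Nonempty := hAne.image _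
    have hbdd : BddAbove (phi g b s '' A) := by
      refine ⟨α, ?_⟩
      rintro _ ⟨t, htA, rfl⟩
      exact htA.2
    set κ' := sSup (phi g b s '' A) with hκ'def
    have hκα : κ' ≤ α := by
      apply csSup_le hine
      rintro _ ⟨t, htA, rfl⟩
      exact htA.2
    set Qn := fun n : ℕ => {u | u ∈ A ∧ κ' - 1/(n+1) < phi g b s u} with hQndef
    have hmQn : ∀ n, MeasurableSet (Qn n) := fun n =>
      hmA.inter (hmφ measurableSet_Ioi)
    have key : ∀ n : ℕ, ENNReal.ofReal β ≤ ENNReal.ofReal α + volume (Qn n) := by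
      intro n
      have hpos : (0:ℝ) < 1/((n:ℝ)+1) := by positivity
      obtain ⟨x0, hx0mem, hx0lt⟩ := exists_lt_of_lt_csSup hine
        (show κ' - 1/((n:ℝ)+1) < κ' by linarith)
      obtain ⟨t, htA, rfl⟩ := hx0mem
      have hsub : A ⊆ {w | w ∈ Lam g ∧ phi g b s w < phi g b s t} ∪ Qn n := by
        intro w hw
        rcases lt_or_ge (phi g b s w) (phi g b s t) with h | h
        · exact Or.inl ⟨hw.1, h⟩
        · exact Or.inr ⟨hw, lt_of_lt_of_le hx0lt h⟩
      calc ENNReal.ofReal β ≤ volume A := hA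
      _ ≤ volume ({w | w ∈ Lam g ∧ phi g b s w < phi g b s t} ∪ Qn n) := measure_mono hsub
      _ ≤ volume {w | w ∈ Lam g ∧ phi g b s w < phi g b s t} + volume (Qn n) :=
            measure_union_le _ _
      _ ≤ Phi g b s t + volume (Qn n) :=
            add_le_add (vol_lt_le_Phi hg hb htA.1) le_rfl
      _ ≤ ENNReal.ofReal α + volume (Qn n) := by
            refine add_le_add ?_ le_rfl
            rw [← ENNReal.ofReal_toReal (Phi_ne_top t)]
            exact ENNReal.ofReal_le_ofReal htA.2
    set Q := {u | u ∈ A ∧ κ' ≤ phi g b s u} with hQdef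
    have hQeq : Q = ⋂ n, Qn n := by
      ext u
      simp only [hQdef, hQndef, mem_setOf_eq, mem_iInter]
      constructor
      · rintro ⟨huA, hle⟩ n
        have : (0:ℝ) < 1/((n:ℝ)+1) := by positivity
        exact ⟨huA, by linarith⟩
      · intro h
        refine ⟨(h 0).1, ?_⟩
        by_contra hc
        push_neg at hc
        obtain ⟨n, hn⟩ := exists_nat_one_div_lt (show (0:ℝ) < κ' - phi g b s u by linarith)
        have := (h n).2
        linarith
    have hanti : Antitone Qn := by
      intro m n hmn u hu
      refine ⟨hu.1, lt_of_le_of_lt ?_ hu.2⟩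
      have h1 : (m:ℝ) + 1 ≤ (n:ℝ) + 1 := by exact_mod_cast Nat.succ_le_succ hmn
      have := one_div_le_one_div_of_le (by positivity : (0:ℝ) < (m:ℝ)+1) h1
      linarith
    have hvolQ : volume Q = ⨅ n, volume (Qn n) := by
      rw [hQeq]
      exact Antitone.measure_iInter hanti (fun n => (hmQn n).nullMeasurableSet)
        ⟨0, ne_top_of_le_ne_top ENNReal.one_ne_top
          (le_trans (measure_mono (fun u hu => Ioo_subset_Icc_self (lam_sub_Ioo hu.1.1)))
            (by rw [Real.volume_Icc]; norm_num))⟩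
    have hlb : ENNReal.ofReal β - ENNReal.ofReal α ≤ volume Q := by
      rw [hvolQ]
      exact le_iInf fun n => tsub_le_iff_left.2 (key n)
    have hQ0 : volume Q ≠ 0 := by
      intro h0
      rw [h0] at hlb
      have : ENNReal.ofReal α < ENNReal.ofReal β :=
        (ENNReal.ofReal_lt_ofReal_iff hβpos).2 hαβ
      exact absurd hlb (not_le.2 (tsub_pos_iff_lt.2 this))
    refine atom_of_vol (s := s) hg hb (γ := κ') (fun u hu => hu.1.1) ?_ hQ0
    intro u hu
    exact le_antisymm (le_csSup hbdd ⟨u, hu.1, rfl⟩) hu.2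

/-- Any subinterval of `[0,1]` contains the `phi` values of two distinct leaves. -/
lemma two_leaves (hg : IsCRT g) (hb : IsEnum g b) {α β : ℝ}
    (hαβ : α < β) (hα0 : 0 ≤ α) (hβ1 : β ≤ 1) :
    ∃ p q, p ∈ Lam g ∧ q ∈ Lam g ∧ p ≠ q ∧
      phi g b s p ∈ Ioo α β ∧ phi g b s q ∈ Ioo α β := by
  by_contra h
  push_neg at h
  by_cases hex : ∃ t ∈ Lam g, phi g b s t ∈ Ioo α β
  · obtain ⟨t0, ht0Λ, ht0⟩ := hex
    refine no_gap (s := s) hg hb (α := phi g b s t0) (β := β) ht0.2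
      (le_trans hα0 ht0.1.le) hβ1 ?_
    intro u huΛ hu
    have huαβ : phi g b s u ∈ Ioo α β := ⟨lt_trans ht0.1 hu.1, hu.2⟩
    have hne : u ≠ t0 := fun heq => by rw [heq] at hu; exact lt_irrefl _ hu.1
    exact (h u t0 huΛ ht0Λ hne huαβ) ht0
  · push_neg at hex
    exact no_gap hg hb hαβ hα0 hβ1 hex

end CRTAux

/-- The shuffled branching points `b'_i` are dense in `[0,1]`. -/
theorem stmt13 (g : ℝ → ℝ) (hg : IsCRT g) (b : ℕ → ℝ) (hb : IsEnum g b) (s : ℕ → Bool) :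
    ∀ x ∈ Set.Icc (0:ℝ) 1, x ∈ closure (Set.range (bI' g b s)) := by
  intro x hx
  rw [Metric.mem_closure_iff]
  intro ε hε
  set α := max 0 (x - ε/2) with hαdef
  set β := min 1 (x + ε/2) with hβdef
  have hx0 : (0:ℝ) ≤ x := hx.1
  have hx1 : x ≤ 1 := hx.2
  have hαβ : α < β := by
    apply max_lt
    · exact lt_min one_pos (by linarith)
    · exact lt_min (by linarith) (by linarith)
  have hα0 : (0:ℝ) ≤ α := le_max_left _ _
  have hβ1 : β ≤ 1 := min_le_left _ _
  have hαlb : x - ε/2 ≤ α := le_max_right _ _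
  have hβub : β ≤ x + ε/2 := min_le_right _ _
  obtain ⟨p, q, hpΛ, hqΛ, hpq, hp, hq⟩ :=
    CRTAux.two_leaves (s := s) hg hb hαβ hα0 hβ1
  rcases CRTAux.tri_total (s := s) hg hb hpΛ hqΛ hpq with hT | hT
  · obtain ⟨i, hF, hS⟩ := (CRTAux.tri_iff hg hb).1 hT
    obtain ⟨h1, h2⟩ := CRTAux.sandwich hg hb hF hS
    refine ⟨bI' g b s i, mem_range_self i, ?_⟩
    rw [Real.dist_eq, abs_sub_lt_iff]
    constructor
    · linarith [hp.1, hq.2]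
    · linarith [hp.1, hq.2]
  · obtain ⟨i, hF, hS⟩ := (CRTAux.tri_iff hg hb).1 hT
    obtain ⟨h1, h2⟩ := CRTAux.sandwich hg hb hF hS
    refine ⟨bI' g b s i, mem_range_self i, ?_⟩
    rw [Real.dist_eq, abs_sub_lt_iff]
    constructor
    · linarith [hq.1, hp.2]
    · linarith [hq.1, hp.2]


end
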